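/- arXiv:1912.01057 — 8 statements merged into one kernel-verified Lean document; each statement's English description precedes it below -/
import Mathlib

section
/- For every complex number a, every positive integer N, and every complex number z, |(cos(z/N) + i·a·sin(z/N))^N| ≤ exp(|a|·|z| + |Im(z)|). -/
open Complex Real

lemma cos_bound_aux (w : ℂ) : ‖Complex.cos w‖ ≤ Real.exp |w.im| := by
  rw [Complex.cos]
  calc ‖(Complex.exp (w * Complex.I) + Complex.exp (-w * Complex.I)) / 2‖
      ≤ (‖Complex.exp (w * Complex.I)‖ +
         ‖Complex.exp (-w * Complex.I)‖) / 2 := by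
        rw [norm_div]
        simp only [Complex.norm_ofNat]
        gcongr
        exact norm_add_le _ _
    _ ≤ (Real.exp |w.im| + Real.exp |w.im|) / 2 := by
        rw [Complex.norm_exp, Complex.norm_exp]
        have h1 : (w * Complex.I).re = -w.im := by simp
        have h2 : (-w * Complex.I).re = w.im := by simp
        rw [h1, h2]
        gcongr <;> [exact neg_le_abs _; exact le_abs_self _]
    _ = Real.exp |w.im| := by ring

lemma sin_bound_aux (w : ℂ) : ‖Complex.sin w‖ ≤ ‖w‖ * Real.exp |w.im| := by
  have hderiv : ∀ t : ℝ, HasDerivAt (fun s : ℝ => Complex.sin ((s : ℂ) * w))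
      (Complex.cos ((t : ℂ) * w) * w) t := by
    intro t
    have h1 : HasDerivAt (fun u : ℂ => Complex.sin (u * w)) (Complex.cos ((t : ℂ) * w) * w) t := by
      have h := (Complex.hasDerivAt_sin ((t : ℂ) * w)).comp (t : ℂ)
        ((hasDerivAt_id (t : ℂ)).mul_const w)
      simp only [one_mul] at h
      exact h
    exact h1.comp_ofReal
  have key : Complex.sin w = ∫ t in (0:ℝ)..1, Complex.cos ((t : ℂ) * w) * w := by
    have := intervalIntegral.integral_eq_sub_of_hasDerivAt (f := fun s : ℝ => Complex.sin ((s:ℂ)*w))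
      (a := 0) (b := 1) (fun t _ => hderiv t) ?_
    · simpa using this.symm
    · apply Continuous.intervalIntegrable
      continuity
  rw [key]
  have := intervalIntegral.norm_integral_le_of_norm_le_const
    (C := Real.exp |w.im| * ‖w‖) (f := fun t : ℝ => Complex.cos ((t : ℂ) * w) * w)
    (a := 0) (b := 1) ?_
  · calc ‖∫ t in (0:ℝ)..1, Complex.cos ((t : ℂ) * w) * w‖
        ≤ Real.exp |w.im| * ‖w‖ * |1 - 0| := this
      _ = ‖w‖ * Real.exp |w.im| := by simp [mul_comm]
  · intro t ht
    rw [Set.uIoc_of_le (by norm_num : (0:ℝ) ≤ 1)] at ht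
    rw [norm_mul]
    gcongr
    calc ‖Complex.cos ((t : ℂ) * w)‖ ≤ Real.exp |((t : ℂ) * w).im| := cos_bound_aux _
      _ ≤ Real.exp |w.im| := by
          apply Real.exp_le_exp.2
          simp only [Complex.mul_im, Complex.ofReal_re, Complex.ofReal_im, zero_mul, add_zero]
          rw [abs_mul, _root_.abs_of_nonneg ht.1.le]
          calc t * |w.im| ≤ 1 * |w.im| := by gcongr; exact ht.2
            _ = |w.im| := one_mul _

theorem FN_bound (a : ℂ) (N : ℕ) (hN : 1 ≤ N) (z : ℂ) :
    ‖(Complex.cos (z / N) + Complex.I * a * Complex.sin (z / N)) ^ N‖ ≤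
      Real.exp (‖a‖ * ‖z‖ + |z.im|) := by
  have hN0 : (0:ℝ) < N := by exact_mod_cast hN
  set w : ℂ := z / N with hw
  have hwn : ‖w‖ = ‖z‖ / N := by
    rw [hw, norm_div]; simp
  have hwim : |w.im| = |z.im| / N := by
    rw [hw]
    have : (z / (N:ℂ)).im = z.im / N := by
      rw [Complex.div_im]
      simp [Complex.normSq_ofNat]
      field_simp
    rw [this, abs_div, abs_of_pos hN0]
  have step : ‖Complex.cos w + Complex.I * a * Complex.sin w‖ ≤
      Real.exp (‖a‖ * ‖w‖ + |w.im|) := by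
    calc ‖Complex.cos w + Complex.I * a * Complex.sin w‖
        ≤ ‖Complex.cos w‖ + ‖Complex.I * a * Complex.sin w‖ := norm_add_le _ _
      _ = ‖Complex.cos w‖ + ‖a‖ * ‖Complex.sin w‖ := by
          rw [norm_mul, norm_mul, Complex.norm_I, one_mul]
      _ ≤ Real.exp |w.im| + ‖a‖ * (‖w‖ * Real.exp |w.im|) := by
          gcongr
          · exact cos_bound_aux w
          · exact sin_bound_aux w
      _ = (1 + ‖a‖ * ‖w‖) * Real.exp |w.im| := by ring
      _ ≤ Real.exp (‖a‖ * ‖w‖) * Real.exp |w.im| := by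
          gcongr
          linarith [Real.add_one_le_exp (‖a‖ * ‖w‖)]
      _ = Real.exp (‖a‖ * ‖w‖ + |w.im|) := (Real.exp_add _ _).symm
  calc ‖(Complex.cos w + Complex.I * a * Complex.sin w) ^ N‖
      = ‖Complex.cos w + Complex.I * a * Complex.sin w‖ ^ N := norm_pow _ _
    _ ≤ Real.exp (‖a‖ * ‖w‖ + |w.im|) ^ N := pow_le_pow_left₀ (norm_nonneg _) step N
    _ = Real.exp ((‖a‖ * ‖w‖ + |w.im|) * N) := by
        rw [← Real.exp_nat_mul]; ring_nf
    _ = Real.exp (‖a‖ * ‖z‖ + |z.im|) := by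
        congr 1
        rw [hwn, hwim]
        field_simp
end

section
/- For every complex number a with α := max(1, |a|), every positive integer N, and every complex number z, |(cos(z/N) + i·a·sin(z/N))^N − exp(i·a·z)| ≤ (2/3)·(|a²−1|/N)·|z|²·exp((α+1)·|z|). -/
open Complex Set

private lemma norm_cexp_le (v : ℂ) : ‖Complex.exp v‖ ≤ Real.exp ‖v‖ := by
  rw [Complex.norm_exp]
  exact Real.exp_le_exp.2 (Complex.re_le_norm v)

private lemma norm_ccos_le (u : ℂ) : ‖Complex.cos u‖ ≤ Real.exp ‖u‖ := by
  have h1 : ‖Complex.exp (u * I)‖ ≤ Real.exp ‖u‖ := by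
    simpa using norm_cexp_le (u * I)
  have h2 : ‖Complex.exp (-u * I)‖ ≤ Real.exp ‖u‖ := by
    simpa using norm_cexp_le (-u * I)
  calc ‖Complex.cos u‖ = ‖Complex.exp (u * I) + Complex.exp (-u * I)‖ / 2 := by
        rw [Complex.cos]; simp
    _ ≤ (Real.exp ‖u‖ + Real.exp ‖u‖) / 2 := by
        gcongr
        exact (norm_add_le _ _).trans (by gcongr)
    _ = Real.exp ‖u‖ := by ring

private lemma norm_csin_le (u : ℂ) : ‖Complex.sin u‖ ≤ ‖u‖ * Real.exp ‖u‖ := by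
  have hconv : Convex ℝ (Metric.closedBall (0 : ℂ) ‖u‖) := convex_closedBall _ _
  have h := hconv.norm_image_sub_le_of_norm_hasDerivWithin_le
    (f := Complex.sin) (f' := Complex.cos) (C := Real.exp ‖u‖)
    (fun x _ => (Complex.hasDerivAt_sin x).hasDerivWithinAt)
    (fun x hx => (norm_ccos_le x).trans
      (Real.exp_le_exp.2 (mem_closedBall_zero_iff.1 hx)))
    (Metric.mem_closedBall_self (norm_nonneg u))
    (mem_closedBall_zero_iff.2 le_rfl)
  simpa [Complex.sin_zero, mul_comm] using h

private lemma pow_sub_pow_norm_le (x y : ℂ) {M : ℝ} (n : ℕ)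
    (hx : ‖x‖ ≤ M) (hy : ‖y‖ ≤ M) :
    ‖x ^ n - y ^ n‖ ≤ n * M ^ (n - 1) * ‖x - y‖ := by
  have hM : 0 ≤ M := (norm_nonneg x).trans hx
  rw [← geom_sum₂_mul, norm_mul]
  gcongr
  calc ‖∑ i ∈ Finset.range n, x ^ i * y ^ (n - 1 - i)‖
      ≤ ∑ i ∈ Finset.range n, ‖x ^ i * y ^ (n - 1 - i)‖ := norm_sum_le _ _
    _ ≤ ∑ i ∈ Finset.range n, M ^ (n - 1) := by
        apply Finset.sum_le_sum
        intro i hi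
        have hi' : i ≤ n - 1 := Nat.le_sub_one_of_lt (Finset.mem_range.1 hi)
        calc ‖x ^ i * y ^ (n - 1 - i)‖ = ‖x‖ ^ i * ‖y‖ ^ (n - 1 - i) := by
              rw [norm_mul, norm_pow, norm_pow]
          _ ≤ M ^ i * M ^ (n - 1 - i) := by gcongr
          _ = M ^ (n - 1) := by rw [← pow_add, Nat.add_sub_cancel' hi']
    _ = n * M ^ (n - 1) := by simp [mul_comm]

private lemma key_bound (a w : ℂ) :
    ‖Complex.cos w + Complex.I * a * Complex.sin w - Complex.exp (Complex.I * a * w)‖ ≤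
      1 / 2 * ‖a ^ 2 - 1‖ * ‖w‖ ^ 2 * Real.exp (max 1 ‖a‖ * ‖w‖) := by
  set α : ℝ := max 1 ‖a‖ with hα
  have hα1 : 1 ≤ α := le_max_left _ _
  have hαa : ‖a‖ ≤ α := le_max_right _ _
  have hα0 : 0 ≤ α := zero_le_one.trans hα1
  set x : ℝ := ‖w‖ with hxdef
  have hx0 : 0 ≤ x := norm_nonneg w
  set C : ℝ := ‖a ^ 2 - 1‖ * x ^ 2 * Real.exp (α * x) with hC
  set H : ℝ → ℂ := fun t =>
    Complex.exp (I * a * w * (1 - t)) * (Complex.cos (t * w) + I * a * Complex.sin (t * w)) -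
      Complex.exp (I * a * w) with hH
  set H' : ℝ → ℂ := fun t =>
    (a ^ 2 - 1) * w * Complex.exp (I * a * w * (1 - t)) * Complex.sin (t * w) with hH'
  -- derivative
  have hderiv : ∀ t : ℝ, HasDerivAt H (H' t) t := by
    intro t
    have hE : HasDerivAt (fun s : ℂ =>
        Complex.exp (I * a * w * (1 - s)) * (Complex.cos (s * w) + I * a * Complex.sin (s * w)) -
          Complex.exp (I * a * w))
        ((a ^ 2 - 1) * w * Complex.exp (I * a * w * (1 - (t : ℂ))) * Complex.sin ((t : ℂ) * w))
        (t : ℂ) := by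
      have h1 : HasDerivAt (fun s : ℂ => I * a * w * (1 - s)) (-(I * a * w)) (t : ℂ) := by
        simpa using ((hasDerivAt_id (t : ℂ)).const_sub 1).const_mul (I * a * w)
      have he := h1.cexp
      have hm : HasDerivAt (fun s : ℂ => s * w) w (t : ℂ) := by
        simpa using (hasDerivAt_id (t : ℂ)).mul_const w
      have hc := hm.ccos
      have hs := hm.csin
      have hg := hc.add (hs.const_mul (I * a))
      have hD := (he.mul hg).sub_const (Complex.exp (I * a * w))
      refine HasDerivAt.congr_deriv hD ?_
      have hIsq : (I : ℂ) ^ 2 = -1 := Complex.I_sq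
      simp only [Pi.add_apply]
      linear_combination (-1 : ℂ) * (a ^ 2 * w * Complex.exp (I * a * w * (1 - (t : ℂ))) *
        Complex.sin ((t : ℂ) * w)) * hIsq
    have hcomp := hE.comp_ofReal
    exact hcomp
  -- bound on derivative
  have hbound : ∀ t ∈ Ico (0 : ℝ) 1, ‖H' t‖ ≤ C * t := by
    intro t ht
    obtain ⟨ht0, ht1⟩ := ht
    have h1t : (0 : ℝ) ≤ 1 - t := by linarith
    have h1 : ‖Complex.exp (I * a * w * (1 - (t : ℂ)))‖ ≤ Real.exp (α * x * (1 - t)) := by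
      refine (norm_cexp_le _).trans (Real.exp_le_exp.2 ?_)
      have hnorm : ‖I * a * w * (1 - (t : ℂ))‖ = ‖a‖ * x * (1 - t) := by
        rw [show ((1 : ℂ) - (t : ℂ)) = ((1 - t : ℝ) : ℂ) by push_cast; ring]
        rw [norm_mul, norm_mul, norm_mul, Complex.norm_real,
          Real.norm_of_nonneg h1t, Complex.norm_I, one_mul, ← hxdef]
      rw [hnorm]
      nlinarith [mul_nonneg hx0 h1t]
    have h2 : ‖Complex.sin ((t : ℂ) * w)‖ ≤ t * x * Real.exp (t * x) := by
      have h := norm_csin_le ((t : ℂ) * w)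
      have hn : ‖(t : ℂ) * w‖ = t * x := by
        rw [norm_mul, Complex.norm_real, Real.norm_of_nonneg ht0, ← hxdef]
      rwa [hn] at h
    have hstep : H' t = (a ^ 2 - 1) * w * Complex.exp (I * a * w * (1 - (t : ℂ))) *
        Complex.sin ((t : ℂ) * w) := rfl
    calc ‖H' t‖ = ‖a ^ 2 - 1‖ * x * (‖Complex.exp (I * a * w * (1 - (t : ℂ)))‖ *
          ‖Complex.sin ((t : ℂ) * w)‖) := by
          rw [hstep, norm_mul, norm_mul, norm_mul]; ring
      _ ≤ ‖a ^ 2 - 1‖ * x * (Real.exp (α * x * (1 - t)) * (t * x * Real.exp (t * x))) := by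
          gcongr
      _ = ‖a ^ 2 - 1‖ * x ^ 2 * (Real.exp (α * x * (1 - t)) * Real.exp (t * x)) * t := by
          ring
      _ = ‖a ^ 2 - 1‖ * x ^ 2 * Real.exp (α * x * (1 - t) + t * x) * t := by
          rw [← Real.exp_add]
      _ ≤ C * t := by
          rw [hC]
          gcongr
          nlinarith [mul_nonneg (mul_nonneg hx0 ht0) (sub_nonneg.2 hα1)]
  -- fencing
  have hB : ∀ s : ℝ, HasDerivAt (fun t : ℝ => C / 2 * t ^ 2) (C * s) s := by
    intro s
    have h := (hasDerivAt_pow 2 s).const_mul (C / 2)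
    refine h.congr_deriv ?_
    ring
  have hmain := image_norm_le_of_norm_deriv_right_le_deriv_boundary
    (f := H) (f' := H') (B := fun t => C / 2 * t ^ 2) (B' := fun t => C * t)
    (a := 0) (b := 1)
    (fun t _ => (hderiv t).continuousAt.continuousWithinAt)
    (fun t _ => (hderiv t).hasDerivWithinAt)
    (by simp [hH])
    hB hbound
  have h1 := hmain (right_mem_Icc.2 zero_le_one)
  have hH1 : H 1 = Complex.cos w + I * a * Complex.sin w - Complex.exp (I * a * w) := by
    simp [hH]
  rw [hH1] at h1
  calc ‖Complex.cos w + I * a * Complex.sin w - Complex.exp (I * a * w)‖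
      ≤ C / 2 * 1 ^ 2 := h1
    _ = 1 / 2 * ‖a ^ 2 - 1‖ * x ^ 2 * Real.exp (α * x) := by rw [hC]; ring

theorem FN_sub_exp_bound (a : ℂ) (N : ℕ) (hN : 1 ≤ N) (z : ℂ) :
    ‖(Complex.cos (z / N) + Complex.I * a * Complex.sin (z / N)) ^ N -
        Complex.exp (Complex.I * a * z)‖ ≤
      2 / 3 * (‖a ^ 2 - 1‖ / N) * ‖z‖ ^ 2 *
        Real.exp ((max 1 ‖a‖ + 1) * ‖z‖) := by
  have hNC : (N : ℂ) ≠ 0 := Nat.cast_ne_zero.2 (by omega)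
  set w : ℂ := z / N with hw
  have hzw : (N : ℂ) * w = z := mul_div_cancel₀ z hNC
  set α : ℝ := max 1 ‖a‖ with hα
  have hα1 : 1 ≤ α := le_max_left _ _
  have hαa : ‖a‖ ≤ α := le_max_right _ _
  set x : ℝ := ‖w‖ with hx
  have hx0 : 0 ≤ x := norm_nonneg w
  have hN1 : (1 : ℝ) ≤ N := by exact_mod_cast hN
  have hzn : ‖z‖ = N * x := by
    rw [← hzw, norm_mul, hx]
    simp
  have hexpz : Complex.exp (I * a * z) = Complex.exp (I * a * w) ^ N := by
    rw [← hzw, show I * a * ((N : ℂ) * w) = (N : ℂ) * (I * a * w) by ring,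
      Complex.exp_nat_mul]
  set M : ℝ := Real.exp ((α + 1) * x) with hM
  have hFM : ‖Complex.cos w + I * a * Complex.sin w‖ ≤ M := by
    have h1 : ‖Complex.cos w + I * a * Complex.sin w‖ ≤ Real.exp x + α * (x * Real.exp x) := by
      refine (norm_add_le _ _).trans ?_
      gcongr
      · exact norm_ccos_le w
      · calc ‖I * a * Complex.sin w‖ = ‖a‖ * ‖Complex.sin w‖ := by
              rw [norm_mul, norm_mul, Complex.norm_I, one_mul]
        _ ≤ α * (x * Real.exp x) := by
              have h := norm_csin_le w
              have h0 : (0:ℝ) ≤ ‖a‖ := norm_nonneg a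
              rw [← hx] at h
              exact mul_le_mul hαa h (norm_nonneg _) (le_trans h0 hαa)
    refine h1.trans ?_
    have h2 : (1 : ℝ) + α * x ≤ Real.exp (α * x) := by
      have := Real.add_one_le_exp (α * x)
      linarith
    calc Real.exp x + α * (x * Real.exp x) = Real.exp x * (1 + α * x) := by ring
      _ ≤ Real.exp x * Real.exp (α * x) := by
          have := Real.exp_pos x
          nlinarith
      _ = M := by rw [hM, ← Real.exp_add]; congr 1; ring
  have hGM : ‖Complex.exp (I * a * w)‖ ≤ M := by
    refine (norm_cexp_le _).trans (Real.exp_le_exp.2 ?_)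
    have hn : ‖I * a * w‖ = ‖a‖ * x := by
      rw [norm_mul, norm_mul, Complex.norm_I, one_mul, hx]
    rw [hn]
    nlinarith [mul_le_mul_of_nonneg_right hαa hx0]
  have hkey := key_bound a w
  rw [← hα, ← hx] at hkey
  have hpow := pow_sub_pow_norm_le (Complex.cos w + I * a * Complex.sin w)
    (Complex.exp (I * a * w)) N hFM hGM
  rw [hexpz]
  have hee : Real.exp ((α + 1) * x) ^ (N - 1) * Real.exp (α * x) ≤
      Real.exp ((α + 1) * ((N : ℝ) * x)) := by
    rw [← Real.exp_nat_mul, ← Real.exp_add]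
    apply Real.exp_le_exp.2
    have hcast : ((N - 1 : ℕ) : ℝ) = (N : ℝ) - 1 := by
      push_cast [hN]; ring
    rw [hcast]
    nlinarith [mul_nonneg (by linarith : (0:ℝ) ≤ α) hx0]
  calc ‖(Complex.cos w + I * a * Complex.sin w) ^ N - Complex.exp (I * a * w) ^ N‖
      ≤ N * M ^ (N - 1) * ‖Complex.cos w + I * a * Complex.sin w - Complex.exp (I * a * w)‖ :=
        hpow
    _ ≤ N * M ^ (N - 1) * (1 / 2 * ‖a ^ 2 - 1‖ * x ^ 2 * Real.exp (α * x)) := by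
        have hMn : (0:ℝ) ≤ (N:ℝ) * M ^ (N - 1) := by positivity
        exact mul_le_mul_of_nonneg_left hkey hMn
    _ = 1 / 2 * (‖a ^ 2 - 1‖ * N * x ^ 2) *
          (Real.exp ((α + 1) * x) ^ (N - 1) * Real.exp (α * x)) := by
        rw [hM]; ring
    _ ≤ 1 / 2 * (‖a ^ 2 - 1‖ * N * x ^ 2) * Real.exp ((α + 1) * ((N : ℝ) * x)) := by
        exact mul_le_mul_of_nonneg_left hee (by positivity)
    _ ≤ 2 / 3 * (‖a ^ 2 - 1‖ * N * x ^ 2) * Real.exp ((α + 1) * ((N : ℝ) * x)) := by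
        apply mul_le_mul_of_nonneg_right _ (Real.exp_nonneg _)
        apply mul_le_mul_of_nonneg_right _ (by positivity)
        norm_num
    _ = 2 / 3 * (‖a ^ 2 - 1‖ / N) * ‖z‖ ^ 2 * Real.exp ((α + 1) * ‖z‖) := by
        rw [hzn]
        have hNR : (N : ℝ) ≠ 0 := by positivity
        field_simp
end

section
/- For all complex numbers a, z and all positive integers N, |a·sin(z/N) − sin(a·z/N)| ≤ (|a²−1|/(6N²))·|z|²·exp(max(1,|a|)·|z|/N). -/
open scoped Nat

set_option maxHeartbeats 1000000 in
open Complex in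
/-- Key estimate for a single complex number `w`. -/
lemma sin_diff_bound_aux (a w : ℂ) :
    ‖a * Complex.sin w - Complex.sin (a * w)‖ ≤
      ‖a ^ 2 - 1‖ / 6 * ‖w‖ ^ 2 * Real.exp (max 1 ‖a‖ * ‖w‖) := by
  set C : ℝ := ‖a ^ 2 - 1‖ with hC
  set M : ℝ := max 1 ‖a‖ with hM
  have hM1 : (1:ℝ) ≤ M := le_max_left _ _
  have hM0 : (0:ℝ) ≤ M := by linarith
  have haM : ‖a‖ ≤ M := le_max_right _ _
  set t : ℝ := M * ‖w‖ with ht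
  have ht0 : 0 ≤ t := mul_nonneg hM0 (norm_nonneg _)
  -- series for the difference
  have h1 : HasSum (fun n : ℕ => a * ((-1) ^ n * w ^ (2 * n + 1) / ↑(2 * n + 1)!))
      (a * Complex.sin w) := (Complex.hasSum_sin w).mul_left a
  have h2 : HasSum (fun n : ℕ => (-1) ^ n * (a * w) ^ (2 * n + 1) / ↑(2 * n + 1)!)
      (Complex.sin (a * w)) := Complex.hasSum_sin (a * w)
  set g : ℕ → ℂ := fun n => (-1) ^ n * (a - a ^ (2 * n + 1)) * w ^ (2 * n + 1) / ↑(2 * n + 1)!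
    with hg
  have hgsum : HasSum g (a * Complex.sin w - Complex.sin (a * w)) := by
    have := h1.sub h2
    convert this using 2 with n
    · rfl
    simp only [hg, mul_pow]
    ring
  -- norm summability
  have hsummg : Summable fun n => ‖g n‖ := hgsum.summable.norm
  -- exp series
  set c : ℝ := C / 6 * ‖w‖ ^ 2 with hc
  have hc0 : 0 ≤ c := by positivity
  have hexp : HasSum (fun n : ℕ => c * (t ^ n / ↑n !)) (c * Real.exp t) := by
    have : HasSum (fun n : ℕ => t ^ n / ↑n !) (Real.exp t) := by
      rw [Real.exp_eq_exp_ℝ]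
      exact NormedSpace.expSeries_div_hasSum_exp t
    exact this.mul_left c
  -- pointwise bound for shifted terms
  have hkey : ∀ k : ℕ, ‖g (k + 1)‖ ≤ c * (t ^ (2 * k + 1) / ↑(2 * k + 1)!) := by
    intro k
    have hfact : ‖g (k + 1)‖ = ‖a - a ^ (2 * (k + 1) + 1)‖ * ‖w‖ ^ (2 * (k + 1) + 1)
        / ↑(2 * (k + 1) + 1)! := by
      simp only [hg]
      rw [norm_div, norm_mul, norm_mul, norm_pow, norm_pow, norm_neg, norm_one, one_pow,
        one_mul, Complex.norm_natCast]
    -- bound on `a - a ^ (2k+3)`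
    have hgeom : a ^ (2 * (k + 1) + 1) - a =
        (a ^ 2 - 1) * (a * ∑ i ∈ Finset.range (k + 1), (a ^ 2) ^ i) := by
      have h := geom_sum_mul (a ^ 2) (k + 1)
      calc a ^ (2 * (k + 1) + 1) - a = a * ((a ^ 2) ^ (k + 1) - 1) := by ring
        _ = a * ((∑ i ∈ Finset.range (k + 1), (a ^ 2) ^ i) * (a ^ 2 - 1)) := by rw [h]
        _ = (a ^ 2 - 1) * (a * ∑ i ∈ Finset.range (k + 1), (a ^ 2) ^ i) := by ring
    have hbound : ‖a - a ^ (2 * (k + 1) + 1)‖ ≤ C * ((k + 1) * M ^ (2 * k + 1)) := by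
      rw [← norm_neg, neg_sub, hgeom, norm_mul]
      refine mul_le_mul_of_nonneg_left ?_ (norm_nonneg _)
      calc ‖a * ∑ i ∈ Finset.range (k + 1), (a ^ 2) ^ i‖
          ≤ ∑ i ∈ Finset.range (k + 1), ‖a * (a ^ 2) ^ i‖ := by
            rw [Finset.mul_sum]; exact norm_sum_le _ _
        _ ≤ ∑ _i ∈ Finset.range (k + 1), M ^ (2 * k + 1) := by
            refine Finset.sum_le_sum fun i hi => ?_
            have hi' : i ≤ k := Nat.lt_succ_iff.mp (Finset.mem_range.mp hi)
            have he : ‖a * (a ^ 2) ^ i‖ = ‖a‖ ^ (2 * i + 1) := by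
              rw [norm_mul, norm_pow, norm_pow]; ring
            rw [he]
            calc ‖a‖ ^ (2 * i + 1) ≤ M ^ (2 * i + 1) :=
                  pow_le_pow_left₀ (norm_nonneg a) haM _
              _ ≤ M ^ (2 * k + 1) := pow_le_pow_right₀ hM1 (by omega)
        _ = (k + 1) * M ^ (2 * k + 1) := by
            rw [Finset.sum_const, Finset.card_range]; push_cast; ring
    rw [hfact]
    have hCnn : (0:ℝ) ≤ C := norm_nonneg _
    have hwpow : ‖w‖ ^ (2 * (k + 1) + 1) = ‖w‖ ^ 2 * ‖w‖ ^ (2 * k + 1) := by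
      rw [← pow_add]; ring_nf
    have hfac : ((2 * (k + 1) + 1)! : ℝ) = ((2 * k + 3) * (2 * k + 2)) * ↑(2 * k + 1)! := by
      have h3 : 2 * (k + 1) + 1 = (2 * k + 1) + 1 + 1 := by ring
      rw [h3, Nat.factorial_succ, Nat.factorial_succ]
      push_cast
      ring
    have hrat : ((k:ℝ) + 1) / ↑(2 * (k + 1) + 1)! ≤ 1 / (6 * ↑(2 * k + 1)!) := by
      rw [hfac, div_le_div_iff₀ (by positivity) (by positivity)]
      have hf : (0:ℝ) ≤ ((2 * k + 1)! : ℝ) := Nat.cast_nonneg _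
      have hk0 : (0:ℝ) ≤ (k:ℝ) := Nat.cast_nonneg _
      nlinarith [mul_nonneg (mul_nonneg hk0 hk0) hf, mul_nonneg hk0 hf]
    calc ‖a - a ^ (2 * (k + 1) + 1)‖ * ‖w‖ ^ (2 * (k + 1) + 1) / ↑(2 * (k + 1) + 1)!
        ≤ C * ((k + 1) * M ^ (2 * k + 1)) * ‖w‖ ^ (2 * (k + 1) + 1) / ↑(2 * (k + 1) + 1)! := by
          gcongr
      _ = (C * M ^ (2 * k + 1) * ‖w‖ ^ (2 * (k + 1) + 1)) *
            (((k:ℝ) + 1) / ↑(2 * (k + 1) + 1)!) := by ring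
      _ ≤ (C * M ^ (2 * k + 1) * ‖w‖ ^ (2 * (k + 1) + 1)) * (1 / (6 * ↑(2 * k + 1)!)) :=
          mul_le_mul_of_nonneg_left hrat (by positivity)
      _ = c * (t ^ (2 * k + 1) / ↑(2 * k + 1)!) := by
          rw [hc, ht, hwpow, mul_pow]; ring
  -- bound the norm by the shifted tsum
  have hnorm : ‖a * Complex.sin w - Complex.sin (a * w)‖ ≤ ∑' n, ‖g n‖ := by
    have h := norm_tsum_le_tsum_norm hsummg
    rwa [hgsum.tsum_eq] at h
  have hg0 : ‖g 0‖ = 0 := by simp [hg]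
  have hsplit : ∑' n, ‖g n‖ = ∑' k, ‖g (k + 1)‖ := by
    rw [Summable.tsum_eq_zero_add hsummg, hg0, zero_add]
  have hshift : Summable fun k => ‖g (k + 1)‖ := (summable_nat_add_iff 1).mpr hsummg
  have hcomp : ∑' k, ‖g (k + 1)‖ ≤ c * Real.exp t := by
    rw [← hexp.tsum_eq]
    exact Summable.tsum_le_tsum_of_inj (fun k => 2 * k + 1) (fun x y h => by dsimp at h; omega)
      (fun n _ => by positivity) hkey hshift hexp.summable
  calc ‖a * Complex.sin w - Complex.sin (a * w)‖ ≤ ∑' n, ‖g n‖ := hnorm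
    _ = ∑' k, ‖g (k + 1)‖ := hsplit
    _ ≤ c * Real.exp t := hcomp
    _ = C / 6 * ‖w‖ ^ 2 * Real.exp (M * ‖w‖) := by rw [hc, ht]

theorem sin_diff_bound (a z : ℂ) (N : ℕ) (hN : 1 ≤ N) :
    ‖a * Complex.sin (z / N) - Complex.sin (a * z / N)‖ ≤
      ‖a ^ 2 - 1‖ / (6 * N ^ 2) * ‖z‖ ^ 2 *
        Real.exp (max 1 ‖a‖ * ‖z‖ / N) := by
  have hN0 : (0:ℝ) < (N:ℝ) := by exact_mod_cast hN
  have hNne : ((N:ℝ)) ≠ 0 := hN0.ne'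
  have key := sin_diff_bound_aux a (z / N)
  have hw : ‖z / (N:ℂ)‖ = ‖z‖ / N := by
    rw [norm_div, Complex.norm_natCast]
  have haw : a * z / (N:ℂ) = a * (z / N) := by ring
  rw [haw]
  refine key.trans_eq ?_
  rw [hw, div_pow, ← mul_div_assoc]
  field_simp
end

section
/- Let b_j ∈ ℂ with |b_j| ≤ C·b^j/Γ(j/p+1) for some C, b > 0 and p ≥ 1, and let f(W) = Σ_{ℓ≥0} a_ℓ W^ℓ be entire with |a_ℓ| ≤ γ·β^ℓ/ℓ! for some γ, β > 0. Then the series g(W) = Σ_{ℓ≥0} (Σ_{j≥0} ((j+ℓ)!/ℓ!)·b_j·a_{ℓ+j}) W^ℓ converges for all W ∈ ℂ, defines an entire function equal to Σ_{j≥0} b_j f^{(j)}(W), and satisfies |g(W)| ≤ γ·C·E_{1/p,1}(bβ)·e^{β|W|} for all W, where E_{1/p,1}(ζ) = Σ_{k≥0} ζ^k/Γ(k/p+1). -/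
lemma ML_summable {p : ℝ} (hp : 1 ≤ p) {x : ℝ} (hx : 0 ≤ x) :
    Summable (fun k : ℕ => x ^ k / Real.Gamma ((k : ℝ) / p + 1)) := by
  have hp0 : 0 < p := by linarith
  set N : ℕ := ⌈p⌉₊ with hN
  have hN1 : 1 ≤ N := Nat.one_le_ceil_iff.mpr hp0
  have hpN : p ≤ N := Nat.le_ceil p
  have hNpos : 0 < (N : ℝ) := by positivity
  have key : ∀ k : ℕ, 1 ≤ k / N → ((k / N).factorial : ℝ) ≤ Real.Gamma ((k : ℝ) / p + 1) := by
    intro k hq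
    have h1 : ((k / N : ℕ) : ℝ) ≤ (k : ℝ) / p := by
      have h2 : ((k / N : ℕ) : ℝ) ≤ (k : ℝ) / N := by
        rw [le_div_iff₀ hNpos]
        exact_mod_cast Nat.div_mul_le_self k N
      have h3 : (k : ℝ) / N ≤ (k : ℝ) / p := by
        apply div_le_div_of_nonneg_left (by positivity) hp0 hpN
      linarith
    have := Real.Gamma_strictMonoOn_Ici.monotoneOn (a := ((k / N : ℕ) : ℝ) + 1)
      (b := (k : ℝ) / p + 1) ?_ ?_ (by linarith)
    · rwa [Real.Gamma_nat_eq_factorial] at this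
    · simp only [Set.mem_Ici]
      have : (1 : ℝ) ≤ ((k / N : ℕ) : ℝ) := by exact_mod_cast hq
      linarith
    · simp only [Set.mem_Ici]
      have : (1 : ℝ) ≤ ((k / N : ℕ) : ℝ) := by exact_mod_cast hq
      linarith
  have hcomp : Summable (fun k : ℕ => x ^ k / ((k / N).factorial : ℝ)) := by
    haveI : NeZero N := ⟨by omega⟩
    rw [← (Nat.divModEquiv N).symm.summable_iff]
    have heq0 : ∀ qr : ℕ × Fin N, ((Nat.divModEquiv N).symm qr : ℕ) = qr.1 * N + (qr.2 : ℕ) := by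
      rintro ⟨q, r⟩; rfl
    have heq1 : ∀ qr : ℕ × Fin N, ((Nat.divModEquiv N).symm qr : ℕ) / N = qr.1 := by
      rintro ⟨q, r⟩
      rw [heq0]
      simp only
      rw [mul_comm, Nat.mul_add_div (by omega), Nat.div_eq_of_lt r.is_lt, add_zero]
    have heq : ∀ qr : ℕ × Fin N, x ^ (((Nat.divModEquiv N).symm qr : ℕ))
        / ((((Nat.divModEquiv N).symm qr : ℕ) / N).factorial : ℝ)
        = x ^ (qr.1 * N + (qr.2 : ℕ)) / (qr.1.factorial : ℝ) := by
      intro qr; rw [heq1, heq0]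
    have hbig : Summable (fun qr : ℕ × Fin N =>
        ((x ^ N) ^ qr.1 / (qr.1.factorial : ℝ)) * (max 1 x) ^ N) := by
      apply Summable.mul_of_nonneg (Real.summable_pow_div_factorial (x ^ N))
        (Summable.of_finite (f := fun _ : Fin N => ((max 1 x) ^ N : ℝ)))
      · intro q; positivity
      · intro r; positivity
    apply Summable.of_nonneg_of_le (fun qr => by simp only [Function.comp_apply]; positivity) ?_ hbig
    intro qr
    simp only [Function.comp_apply]
    rw [heq qr]
    rw [div_mul_eq_mul_div, ← pow_mul]
    apply div_le_div_of_nonneg_right ?_ (by positivity)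
    calc x ^ (qr.1 * N + (qr.2 : ℕ)) = x ^ (N * qr.1) * x ^ (qr.2 : ℕ) := by
          rw [mul_comm qr.1 N, pow_add]
      _ ≤ x ^ (N * qr.1) * (max 1 x) ^ N := by
          apply mul_le_mul_of_nonneg_left ?_ (by positivity)
          calc x ^ (qr.2 : ℕ) ≤ (max 1 x) ^ (qr.2 : ℕ) :=
                pow_le_pow_left₀ hx (le_max_right 1 x) _
            _ ≤ (max 1 x) ^ N := pow_le_pow_right₀ (le_max_left 1 x) (le_of_lt qr.2.is_lt)
  rw [← summable_nat_add_iff N]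
  apply Summable.of_nonneg_of_le (fun k => by positivity) ?_ ((summable_nat_add_iff N).mpr hcomp)
  intro k
  apply div_le_div_of_nonneg_left (by positivity) ?_ (key (k + N) ?_)
  · have : (0:ℝ) < ((k + N) / N : ℕ).factorial := by positivity
    linarith [this]
  · rw [Nat.one_le_div_iff (by omega)]; omega

lemma series_summable (c : ℕ → ℂ) (K B : ℝ) (hB : 0 ≤ B)
    (hc : ∀ n, ‖c n‖ ≤ K * B ^ n / n.factorial) (z : ℂ) :
    Summable (fun n : ℕ => c n * z ^ n) := by
  apply Summable.of_norm
  apply Summable.of_nonneg_of_le (fun n => norm_nonneg _) ?_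
    ((Real.summable_pow_div_factorial (B * ‖z‖)).mul_left K)
  intro n
  calc ‖c n * z ^ n‖ = ‖c n‖ * ‖z‖ ^ n := by rw [norm_mul, norm_pow]
    _ ≤ (K * B ^ n / n.factorial) * ‖z‖ ^ n :=
        mul_le_mul_of_nonneg_right (hc n) (by positivity)
    _ = K * ((B * ‖z‖) ^ n / n.factorial) := by rw [mul_pow]; ring

lemma deriv_terms_summable (c : ℕ → ℂ) (K B : ℝ) (hB : 0 ≤ B)
    (hc : ∀ n, ‖c n‖ ≤ K * B ^ n / n.factorial) {R : ℝ} (hR : 1 ≤ R) {y : ℂ} (hy : ‖y‖ ≤ R)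
    (n : ℕ) : ‖c n * ((n : ℂ) * y ^ (n - 1))‖ ≤ K * ((2 * B * R) ^ n / n.factorial) := by
  have h2 : (n : ℝ) ≤ 2 ^ n := by
    calc (n : ℝ) ≤ ((2 ^ n : ℕ) : ℝ) := by exact_mod_cast (Nat.lt_two_pow_self (n := n)).le
      _ = 2 ^ n := by push_cast; ring
  have hyn : ‖y‖ ^ (n - 1) ≤ R ^ n := by
    calc ‖y‖ ^ (n - 1) ≤ R ^ (n - 1) := pow_le_pow_left₀ (norm_nonneg y) hy _
      _ ≤ R ^ n := pow_le_pow_right₀ hR (Nat.sub_le n 1)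
  calc ‖c n * ((n : ℂ) * y ^ (n - 1))‖ = ‖c n‖ * ((n : ℝ) * ‖y‖ ^ (n - 1)) := by
        rw [norm_mul, norm_mul, norm_pow, Complex.norm_natCast]
    _ ≤ (K * B ^ n / n.factorial) * (2 ^ n * R ^ n) := by
        apply mul_le_mul (hc n) ?_ (by positivity)
        · have : (0:ℝ) ≤ K * B ^ n / n.factorial := le_trans (norm_nonneg _) (hc n)
          exact this
        · exact mul_le_mul h2 hyn (by positivity) (by positivity)
    _ = K * ((2 * B * R) ^ n / n.factorial) := by
        rw [mul_pow, mul_pow]; ring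

lemma series_hasDerivAt (c : ℕ → ℂ) (K B : ℝ) (hB : 0 ≤ B)
    (hc : ∀ n, ‖c n‖ ≤ K * B ^ n / n.factorial) (z : ℂ) :
    HasDerivAt (fun w => ∑' n : ℕ, c n * w ^ n)
      (∑' n : ℕ, c n * ((n : ℂ) * z ^ (n - 1))) z := by
  set R : ℝ := ‖z‖ + 1 with hR
  have hR1 : 1 ≤ R := by simp [hR]
  apply hasDerivAt_tsum_of_isPreconnected
    (u := fun n : ℕ => K * ((2 * B * R) ^ n / n.factorial))
    ((Real.summable_pow_div_factorial (2 * B * R)).mul_left K)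
    (Metric.isOpen_ball (x := (0:ℂ)) (ε := R))
    ((convex_ball (0:ℂ) R).isPreconnected)
    (fun n y _ => (hasDerivAt_pow n y).const_mul (c n))
    (fun n y hy => deriv_terms_summable c K B hB hc hR1 (le_of_lt (mem_ball_zero_iff.mp hy)) n)
    (y₀ := 0) (Metric.mem_ball_self (by positivity))
    (by simpa using series_summable c K B hB hc 0)
    (mem_ball_zero_iff.mpr (by simp [hR]))

lemma deriv_series_shift (c : ℕ → ℂ) (K B : ℝ) (hB : 0 ≤ B)
    (hc : ∀ n, ‖c n‖ ≤ K * B ^ n / n.factorial) (z : ℂ) :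
    (∑' n : ℕ, c n * ((n : ℂ) * z ^ (n - 1)))
      = ∑' n : ℕ, ((n : ℂ) + 1) * c (n + 1) * z ^ n := by
  have hs : Summable (fun n : ℕ => c n * ((n : ℂ) * z ^ (n - 1))) := by
    apply Summable.of_norm
    apply Summable.of_nonneg_of_le (fun n => norm_nonneg _)
      (fun n => deriv_terms_summable c K B hB hc (R := ‖z‖ + 1)
        (by linarith [norm_nonneg z]) (by linarith) n)
      ((Real.summable_pow_div_factorial (2 * B * (‖z‖ + 1))).mul_left K)
  rw [Summable.tsum_eq_zero_add hs]
  simp only [Nat.cast_zero, zero_mul, mul_zero, zero_add, Nat.cast_add, Nat.cast_one,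
    Nat.add_sub_cancel]
  exact tsum_congr fun n => by ring

lemma coeff_bound (γ β : ℝ) (hγ : 0 < γ) (hβ : 0 < β) (a : ℕ → ℂ)
    (ha : ∀ ℓ : ℕ, ‖a ℓ‖ ≤ γ * β ^ ℓ / (Nat.factorial ℓ)) (j ℓ : ℕ) :
    ‖(((ℓ + j).factorial : ℂ) / (ℓ.factorial : ℂ)) * a (ℓ + j)‖
      ≤ (γ * β ^ j) * β ^ ℓ / ℓ.factorial := by
  have hfac : (0:ℝ) < (ℓ + j).factorial := by positivity
  have hfac2 : (0:ℝ) < ℓ.factorial := by positivity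
  calc ‖(((ℓ + j).factorial : ℂ) / (ℓ.factorial : ℂ)) * a (ℓ + j)‖
      = ((ℓ + j).factorial : ℝ) / (ℓ.factorial : ℝ) * ‖a (ℓ + j)‖ := by
        rw [norm_mul, norm_div, Complex.norm_natCast, Complex.norm_natCast]
    _ ≤ ((ℓ + j).factorial : ℝ) / (ℓ.factorial : ℝ) * (γ * β ^ (ℓ + j) / (ℓ + j).factorial) :=
        mul_le_mul_of_nonneg_left (ha (ℓ + j)) (by positivity)
    _ = (γ * β ^ j) * β ^ ℓ / ℓ.factorial := by
        rw [pow_add]; field_simp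

lemma iterated_deriv_eq (γ β : ℝ) (hγ : 0 < γ) (hβ : 0 < β) (a : ℕ → ℂ) (f : ℂ → ℂ)
    (ha : ∀ ℓ : ℕ, ‖a ℓ‖ ≤ γ * β ^ ℓ / (Nat.factorial ℓ))
    (hf : ∀ z : ℂ, HasSum (fun ℓ : ℕ => a ℓ * z ^ ℓ) (f z)) (j : ℕ) :
    iteratedDeriv j f = fun z => ∑' ℓ : ℕ,
      (((ℓ + j).factorial : ℂ) / (ℓ.factorial : ℂ)) * a (ℓ + j) * z ^ ℓ := by
  induction j with
  | zero =>
    rw [iteratedDeriv_zero]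
    funext z
    rw [← (hf z).tsum_eq]
    apply tsum_congr
    intro ℓ
    simp [div_self, Nat.cast_ne_zero.mpr (Nat.factorial_ne_zero ℓ)]
  | succ j ih =>
    rw [iteratedDeriv_succ, ih]
    funext z
    have hd := series_hasDerivAt (fun ℓ => (((ℓ + j).factorial : ℂ) / (ℓ.factorial : ℂ)) * a (ℓ + j))
      (γ * β ^ j) β (le_of_lt hβ) (coeff_bound γ β hγ hβ a ha j) z
    rw [hd.deriv, deriv_series_shift (fun ℓ => (((ℓ + j).factorial : ℂ) / (ℓ.factorial : ℂ)) * a (ℓ + j))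
      (γ * β ^ j) β (le_of_lt hβ) (coeff_bound γ β hγ hβ a ha j) z]
    apply tsum_congr
    intro n
    have hidx : n + 1 + j = n + (j + 1) := by omega
    rw [hidx]
    have hfs : ((n+1).factorial : ℂ) = ((n:ℂ) + 1) * (n.factorial : ℂ) := by
      rw [Nat.factorial_succ]; push_cast; ring
    rw [hfs]
    have h1 : ((n:ℂ) + 1) ≠ 0 := Nat.cast_add_one_ne_zero n
    have h2 : (n.factorial : ℂ) ≠ 0 := Nat.cast_ne_zero.mpr (Nat.factorial_ne_zero n)
    field_simp

set_option maxHeartbeats 1000000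

theorem infinite_order_operator_action (p C b γ β : ℝ) (hp : 1 ≤ p)
    (hC : 0 < C) (hb : 0 < b) (hγ : 0 < γ) (hβ : 0 < β)
    (bcoef : ℕ → ℂ) (a : ℕ → ℂ) (f : ℂ → ℂ)
    (hbc : ∀ j : ℕ, ‖bcoef j‖ ≤ C * b ^ j / Real.Gamma ((j : ℝ) / p + 1))
    (ha : ∀ ℓ : ℕ, ‖a ℓ‖ ≤ γ * β ^ ℓ / (Nat.factorial ℓ))
    (hf : ∀ z : ℂ, HasSum (fun ℓ : ℕ => a ℓ * z ^ ℓ) (f z)) :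
    ∃ g : ℂ → ℂ, Differentiable ℂ g ∧ ∀ W : ℂ,
      (∀ ℓ : ℕ, Summable (fun j : ℕ =>
        ((Nat.factorial (j + ℓ) : ℂ) / (Nat.factorial ℓ)) * bcoef j * a (ℓ + j))) ∧
      HasSum (fun ℓ : ℕ =>
        (∑' j : ℕ, ((Nat.factorial (j + ℓ) : ℂ) / (Nat.factorial ℓ)) * bcoef j *
          a (ℓ + j)) * W ^ ℓ) (g W) ∧
      HasSum (fun j : ℕ => bcoef j * iteratedDeriv j f W) (g W) ∧
      ‖g W‖ ≤ γ * C * (∑' k : ℕ, (b * β) ^ k / Real.Gamma ((k : ℝ) / p + 1)) *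
        Real.exp (β * ‖W‖) := by
  have hx : (0:ℝ) ≤ b * β := by positivity
  have hML : Summable (fun k : ℕ => (b * β) ^ k / Real.Gamma ((k : ℝ) / p + 1)) :=
    ML_summable hp hx
  set E : ℝ := ∑' k : ℕ, (b * β) ^ k / Real.Gamma ((k : ℝ) / p + 1) with hE
  have hΓpos : ∀ j : ℕ, 0 < Real.Gamma ((j : ℝ) / p + 1) := fun j =>
    Real.Gamma_pos_of_pos (by positivity)
  have hu : Summable (fun j : ℕ => C * ((b * β) ^ j / Real.Gamma ((j : ℝ) / p + 1))) :=
    hML.mul_left C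
  have hu0 : ∀ j : ℕ, 0 ≤ C * ((b * β) ^ j / Real.Gamma ((j : ℝ) / p + 1)) := fun j => by
    have := hΓpos j; positivity
  -- term bound
  have Tb : ∀ j ℓ : ℕ, ‖((Nat.factorial (j + ℓ) : ℂ) / (Nat.factorial ℓ)) * bcoef j * a (ℓ + j)‖
      ≤ (C * ((b * β) ^ j / Real.Gamma ((j : ℝ) / p + 1))) * (γ * (β ^ ℓ / ℓ.factorial)) := by
    intro j ℓ
    have hG := hΓpos j
    have hA : (0:ℝ) < ((j + ℓ).factorial : ℝ) := by positivity
    have hL : (0:ℝ) < (ℓ.factorial : ℝ) := by positivity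
    have h1 : ‖((Nat.factorial (j + ℓ) : ℂ) / (Nat.factorial ℓ)) * bcoef j * a (ℓ + j)‖
        = ((j + ℓ).factorial : ℝ) / (ℓ.factorial : ℝ) * ‖bcoef j‖ * ‖a (ℓ + j)‖ := by
      rw [norm_mul, norm_mul, norm_div, Complex.norm_natCast, Complex.norm_natCast]
    rw [h1]
    calc ((j + ℓ).factorial : ℝ) / (ℓ.factorial : ℝ) * ‖bcoef j‖ * ‖a (ℓ + j)‖
        ≤ ((j + ℓ).factorial : ℝ) / (ℓ.factorial : ℝ) * (C * b ^ j / Real.Gamma ((j : ℝ) / p + 1))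
          * (γ * β ^ (ℓ + j) / (ℓ + j).factorial) := by
          apply mul_le_mul (mul_le_mul_of_nonneg_left (hbc j) (by positivity)) (ha (ℓ + j))
            (norm_nonneg _) (by positivity)
      _ = (C * ((b * β) ^ j / Real.Gamma ((j : ℝ) / p + 1))) * (γ * (β ^ ℓ / ℓ.factorial)) := by
          have hsw : ((ℓ + j).factorial : ℝ) = ((j + ℓ).factorial : ℝ) := by rw [Nat.add_comm]
          rw [hsw, pow_add, mul_pow]
          field_simp
  -- summability in j for each ℓ
  have S1 : ∀ ℓ : ℕ, Summable (fun j : ℕ =>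
      ((Nat.factorial (j + ℓ) : ℂ) / (Nat.factorial ℓ)) * bcoef j * a (ℓ + j)) := by
    intro ℓ
    apply Summable.of_norm
    exact Summable.of_nonneg_of_le (fun j => norm_nonneg _) (fun j => Tb j ℓ)
      (hu.mul_right _)
  -- bound on the coefficients e ℓ
  have he : ∀ ℓ : ℕ, ‖∑' j : ℕ, ((Nat.factorial (j + ℓ) : ℂ) / (Nat.factorial ℓ)) * bcoef j *
      a (ℓ + j)‖ ≤ (γ * C * E) * β ^ ℓ / ℓ.factorial := by
    intro ℓ
    have hsn : Summable (fun j : ℕ =>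
        ‖((Nat.factorial (j + ℓ) : ℂ) / (Nat.factorial ℓ)) * bcoef j * a (ℓ + j)‖) :=
      Summable.of_nonneg_of_le (fun j => norm_nonneg _) (fun j => Tb j ℓ) (hu.mul_right _)
    calc ‖∑' j : ℕ, ((Nat.factorial (j + ℓ) : ℂ) / (Nat.factorial ℓ)) * bcoef j * a (ℓ + j)‖
        ≤ ∑' j : ℕ, ‖((Nat.factorial (j + ℓ) : ℂ) / (Nat.factorial ℓ)) * bcoef j * a (ℓ + j)‖ :=
          norm_tsum_le_tsum_norm hsn
      _ ≤ ∑' j : ℕ, (C * ((b * β) ^ j / Real.Gamma ((j : ℝ) / p + 1)))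
            * (γ * (β ^ ℓ / ℓ.factorial)) :=
          Summable.tsum_le_tsum (fun j => Tb j ℓ) hsn (hu.mul_right _)
      _ = (C * E) * (γ * (β ^ ℓ / ℓ.factorial)) := by
          rw [tsum_mul_right, tsum_mul_left]
      _ = (γ * C * E) * β ^ ℓ / ℓ.factorial := by ring
  refine ⟨fun W => ∑' ℓ : ℕ, (∑' j : ℕ, ((Nat.factorial (j + ℓ) : ℂ) / (Nat.factorial ℓ)) *
    bcoef j * a (ℓ + j)) * W ^ ℓ, ?_, ?_⟩
  · intro W
    exact (series_hasDerivAt _ (γ * C * E) β (le_of_lt hβ) he W).differentiableAt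
  intro W
  -- double sum machinery
  set T : ℕ × ℕ → ℂ := fun q => ((Nat.factorial (q.1 + q.2) : ℂ) / (Nat.factorial q.2)) *
    bcoef q.1 * a (q.2 + q.1) * W ^ q.2 with hT_def
  have hw : Summable (fun ℓ : ℕ => γ * ((β * ‖W‖) ^ ℓ / ℓ.factorial)) :=
    (Real.summable_pow_div_factorial _).mul_left γ
  have hw0 : ∀ ℓ : ℕ, 0 ≤ γ * ((β * ‖W‖) ^ ℓ / ℓ.factorial) := fun ℓ => by positivity
  have hTb : ∀ q : ℕ × ℕ, ‖T q‖ ≤ (C * ((b * β) ^ q.1 / Real.Gamma ((q.1 : ℝ) / p + 1)))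
      * (γ * ((β * ‖W‖) ^ q.2 / q.2.factorial)) := by
    rintro ⟨j, ℓ⟩
    calc ‖T (j, ℓ)‖ = ‖((Nat.factorial (j + ℓ) : ℂ) / (Nat.factorial ℓ)) * bcoef j * a (ℓ + j)‖
          * ‖W‖ ^ ℓ := by rw [hT_def]; simp [norm_mul, norm_pow]
      _ ≤ ((C * ((b * β) ^ j / Real.Gamma ((j : ℝ) / p + 1))) * (γ * (β ^ ℓ / ℓ.factorial)))
          * ‖W‖ ^ ℓ := mul_le_mul_of_nonneg_right (Tb j ℓ) (by positivity)
      _ = (C * ((b * β) ^ j / Real.Gamma ((j : ℝ) / p + 1)))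
          * (γ * ((β * ‖W‖) ^ ℓ / ℓ.factorial)) := by rw [mul_pow]; ring
  have hprod : Summable (fun q : ℕ × ℕ => (C * ((b * β) ^ q.1 / Real.Gamma ((q.1 : ℝ) / p + 1)))
      * (γ * ((β * ‖W‖) ^ q.2 / q.2.factorial))) :=
    Summable.mul_of_nonneg hu hw hu0 hw0
  have hTnorm : Summable (fun q : ℕ × ℕ => ‖T q‖) :=
    Summable.of_nonneg_of_le (fun q => norm_nonneg _) hTb hprod
  have hT : Summable T := Summable.of_norm hTnorm
  have hTsum := hT.hasSum
  -- fiberwise over ℓ (swapped)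
  have fibL : ∀ ℓ : ℕ, HasSum (fun j : ℕ => T (j, ℓ))
      ((∑' j : ℕ, ((Nat.factorial (j + ℓ) : ℂ) / (Nat.factorial ℓ)) * bcoef j * a (ℓ + j))
        * W ^ ℓ) := fun ℓ => (S1 ℓ).hasSum.mul_right (W ^ ℓ)
  have hGW : HasSum (fun ℓ : ℕ =>
      (∑' j : ℕ, ((Nat.factorial (j + ℓ) : ℂ) / (Nat.factorial ℓ)) * bcoef j * a (ℓ + j))
        * W ^ ℓ) (∑' q : ℕ × ℕ, T q) :=
    HasSum.prod_fiberwise ((Equiv.prodComm ℕ ℕ).hasSum_iff.mpr hTsum) fibL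
  have hgT : (∑' ℓ : ℕ, (∑' j : ℕ, ((Nat.factorial (j + ℓ) : ℂ) / (Nat.factorial ℓ)) *
      bcoef j * a (ℓ + j)) * W ^ ℓ) = ∑' q : ℕ × ℕ, T q := hGW.tsum_eq
  refine ⟨S1, ?_, ?_, ?_⟩
  · beta_reduce
    rw [hgT]; exact hGW
  · -- sum over j of bcoef j * iteratedDeriv j f W
    have fibJ : ∀ j : ℕ, HasSum (fun ℓ : ℕ => T (j, ℓ)) (bcoef j * iteratedDeriv j f W) := by
      intro j
      have hit : iteratedDeriv j f W = ∑' ℓ : ℕ,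
          (((ℓ + j).factorial : ℂ) / (ℓ.factorial : ℂ)) * a (ℓ + j) * W ^ ℓ :=
        congrFun (iterated_deriv_eq γ β hγ hβ a f ha hf j) W
      have h1 : HasSum (fun ℓ : ℕ => (((ℓ + j).factorial : ℂ) / (ℓ.factorial : ℂ)) * a (ℓ + j)
          * W ^ ℓ) (iteratedDeriv j f W) := by
        rw [hit]
        exact (series_summable _ (γ * β ^ j) β (le_of_lt hβ)
          (coeff_bound γ β hγ hβ a ha j) W).hasSum
      have h2 := h1.mul_left (bcoef j)
      have h3 : (fun ℓ : ℕ => bcoef j * ((((ℓ + j).factorial : ℂ) / (ℓ.factorial : ℂ)) *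
          a (ℓ + j) * W ^ ℓ)) = fun ℓ : ℕ => T (j, ℓ) := by
        funext ℓ
        rw [hT_def]
        have hsw : (((ℓ + j).factorial : ℕ) : ℂ) = (((j + ℓ).factorial : ℕ) : ℂ) := by
          rw [Nat.add_comm]
        simp only
        rw [hsw]
        ring
      rw [h3] at h2
      exact h2
    beta_reduce
    rw [hgT]
    exact HasSum.prod_fiberwise hTsum fibJ
  · -- the norm bound
    have habs_u : Summable (fun j : ℕ =>
        ‖C * ((b * β) ^ j / Real.Gamma ((j : ℝ) / p + 1))‖) :=
      hu.congr fun j => (Real.norm_of_nonneg (hu0 j)).symm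
    have habs_w : Summable (fun ℓ : ℕ => ‖γ * ((β * ‖W‖) ^ ℓ / ℓ.factorial)‖) :=
      hw.congr fun ℓ => (Real.norm_of_nonneg (hw0 ℓ)).symm
    have hmul := tsum_mul_tsum_of_summable_norm habs_u habs_w
    have hexp : ∑' ℓ : ℕ, (β * ‖W‖) ^ ℓ / (ℓ.factorial : ℝ) = Real.exp (β * ‖W‖) := by
      rw [Real.exp_eq_exp_ℝ, NormedSpace.exp_eq_tsum_div]
    beta_reduce
    calc ‖∑' ℓ : ℕ, (∑' j : ℕ, ((Nat.factorial (j + ℓ) : ℂ) / (Nat.factorial ℓ)) *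
          bcoef j * a (ℓ + j)) * W ^ ℓ‖
        = ‖∑' q : ℕ × ℕ, T q‖ := by rw [hgT]
      _ ≤ ∑' q : ℕ × ℕ, ‖T q‖ := norm_tsum_le_tsum_norm hTnorm
      _ ≤ ∑' q : ℕ × ℕ, (C * ((b * β) ^ q.1 / Real.Gamma ((q.1 : ℝ) / p + 1)))
            * (γ * ((β * ‖W‖) ^ q.2 / q.2.factorial)) := Summable.tsum_le_tsum hTb hTnorm hprod
      _ = (∑' j : ℕ, C * ((b * β) ^ j / Real.Gamma ((j : ℝ) / p + 1)))
            * ∑' ℓ : ℕ, γ * ((β * ‖W‖) ^ ℓ / ℓ.factorial) := hmul.symm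
      _ = (C * E) * (γ * Real.exp (β * ‖W‖)) := by
          rw [tsum_mul_left, tsum_mul_left, hexp]
      _ = γ * C * E * Real.exp (β * ‖W‖) := by ring
end

section
/- Let F : ℂ → ℂ be entire and suppose that for every ε > 0 there is A_ε ≥ 0 with |F(Z)| ≤ A_ε·exp(ε·|Z|^q) for all Z ∈ ℂ, where 1 < q ≤ 2. Let χ > −1 and c > 0. Then for every θ ∈ (−π/4, π/4), the integral ∫_0^∞ (t·e^{iθ})^χ · exp(−c·(t·e^{iθ})²) · F(t·e^{iθ}) · e^{iθ} dt converges absolutely and its value is independent of θ; in particular it equals ∫_0^∞ t^χ e^{−ct²} F(t) dt. -/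
open MeasureTheory

open Complex Real Set

noncomputable def gAux (F : ℂ → ℂ) (χ c : ℝ) (w : ℂ) : ℂ :=
  Complex.exp (((χ:ℂ)+1) * w) * Complex.exp (-(c:ℂ) * Complex.exp (2*w)) * F (Complex.exp w)

lemma gAux_diff (F : ℂ → ℂ) (hF : Differentiable ℂ F) (χ c : ℝ) :
    Differentiable ℂ (gAux F χ c) := by
  unfold gAux
  fun_prop

lemma gAux_norm (F : ℂ → ℂ) (χ c : ℝ) (w : ℂ) :
    ‖gAux F χ c w‖ = Real.exp ((χ+1) * w.re) *
      Real.exp (-(c * (Real.exp (2*w.re) * Real.cos (2*w.im)))) * ‖F (Complex.exp w)‖ := by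
  unfold gAux
  rw [norm_mul, norm_mul, Complex.norm_exp,
    Complex.norm_exp]
  congr 3
  · simp [Complex.add_re, Complex.mul_re]
  · simp [Complex.mul_re, Complex.exp_re, Complex.exp_im, Complex.mul_im]

lemma gAux_bound (F : ℂ → ℂ) (q : ℝ) (hq1 : 1 < q) (hq2 : q ≤ 2)
    (χ c : ℝ) (hc : 0 < c) (δ : ℝ) (hδ : 0 < δ)
    (A ε : ℝ) (hA : 0 ≤ A) (hε : ε = c * δ / 2)
    (hFb : ∀ Z : ℂ, ‖F Z‖ ≤ A * Real.exp (ε * ‖Z‖ ^ q))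
    (w : ℂ) (hw : δ ≤ Real.cos (2 * w.im)) :
    ‖gAux F χ c w‖ ≤ (A * Real.exp ε) *
      Real.exp ((χ+1) * w.re - (c * δ / 2) * Real.exp (2 * w.re)) := by
  subst hε
  set ε := c * δ / 2 with hε
  have hε0 : 0 < ε := by positivity
  rw [gAux_norm]
  have hnorm : ‖Complex.exp w‖ = Real.exp w.re := Complex.norm_exp w
  have hFw : ‖F (Complex.exp w)‖ ≤ A * Real.exp (ε * Real.exp (q * w.re)) := by
    have := hFb (Complex.exp w)
    rwa [hnorm, ← Real.exp_one_rpow w.re, ← Real.rpow_mul (Real.exp_pos 1).le,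
      Real.exp_one_rpow, mul_comm w.re q] at this
  have hqu : Real.exp (q * w.re) ≤ 1 + Real.exp (2 * w.re) := by
    rcases le_or_gt w.re 0 with h | h
    · have h1 : q * w.re ≤ 0 := mul_nonpos_of_nonneg_of_nonpos (by linarith) h
      have h2 := Real.exp_le_one_iff.mpr h1
      linarith [Real.exp_pos (2 * w.re)]
    · have h1 : q * w.re ≤ 2 * w.re := by nlinarith
      have h2 := Real.exp_le_exp.mpr h1
      linarith [Real.exp_pos (2 * w.re)]
  have h1 : Real.exp (-(c * (Real.exp (2*w.re) * Real.cos (2*w.im)))) ≤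
      Real.exp (-(c * δ * Real.exp (2*w.re))) := by
    apply Real.exp_le_exp.mpr
    have h := mul_le_mul_of_nonneg_left hw (mul_nonneg hc.le (Real.exp_pos (2*w.re)).le)
    nlinarith [h]
  have h2 : ε * Real.exp (q * w.re) ≤ ε + ε * Real.exp (2 * w.re) := by nlinarith
  have key : ∀ a b k : ℝ, Real.exp a * Real.exp b * (A * Real.exp k)
      = A * Real.exp (a + b + k) := by
    intro a b k; rw [Real.exp_add, Real.exp_add]; ring
  calc Real.exp ((χ+1)*w.re) * Real.exp (-(c*(Real.exp (2*w.re)*Real.cos (2*w.im)))) *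
        ‖F (Complex.exp w)‖
      ≤ Real.exp ((χ+1)*w.re) * Real.exp (-(c*δ*Real.exp (2*w.re))) *
        (A * Real.exp (ε + ε * Real.exp (2*w.re))) := by
        gcongr
        exact hFw.trans (by gcongr)
    _ = A * Real.exp (((χ+1)*w.re + -(c*δ*Real.exp (2*w.re))) + (ε + ε*Real.exp (2*w.re))) :=
        key _ _ _
    _ = A * Real.exp ε * Real.exp ((χ+1)*w.re - c*δ/2*Real.exp (2*w.re)) := by
        rw [mul_assoc A, ← Real.exp_add]; congr 1; rw [hε]; ring

lemma M_integrable (a b : ℝ) (ha : 0 < a) (hb : 0 < b) :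
    Integrable (fun u : ℝ => Real.exp (a*u - b*Real.exp (2*u))) := by
  have hder : ∀ x ∈ (univ : Set ℝ), HasDerivWithinAt Real.exp (Real.exp x) univ x :=
    fun x _ => (Real.hasDerivAt_exp x).hasDerivWithinAt
  have key := integrableOn_image_iff_integrableOn_abs_deriv_smul MeasurableSet.univ hder
    Real.exp_injective.injOn (fun t : ℝ => t ^ (a-1) * Real.exp (-b * t^2))
  rw [Set.image_univ, Real.range_exp] at key
  have hI : IntegrableOn (fun t : ℝ => t ^ (a-1) * Real.exp (-b*t^2)) (Ioi 0) :=
    (integrable_rpow_mul_exp_neg_mul_sq hb (show (-1:ℝ) < a-1 by linarith)).integrableOn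
  have h2 := key.mp hI
  rw [integrableOn_univ] at h2
  refine h2.congr (Filter.Eventually.of_forall fun x => ?_)
  simp only [smul_eq_mul]
  rw [ abs_of_pos (Real.exp_pos x),
    Real.rpow_def_of_pos (Real.exp_pos x), Real.log_exp, ← mul_assoc, ← Real.exp_add,
    ← Real.exp_add]
  congr 1
  rw [← Real.exp_nat_mul]
  push_cast
  ring_nf

lemma M_tendsto_atBot (a b : ℝ) (ha : 0 < a) (hb : 0 < b) :
    Filter.Tendsto (fun u : ℝ => Real.exp (a*u - b*Real.exp (2*u))) Filter.atBot (nhds 0) := by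
  refine tendsto_of_tendsto_of_tendsto_of_le_of_le' tendsto_const_nhds
    (Real.tendsto_exp_atBot.comp ((Filter.tendsto_const_mul_atBot_of_pos ha).mpr Filter.tendsto_id))
    (Filter.Eventually.of_forall fun u => (Real.exp_pos _).le)
    (Filter.Eventually.of_forall fun u => ?_)
  simp only [Function.comp, id]
  apply Real.exp_le_exp.mpr
  nlinarith [Real.exp_pos (2*u)]

lemma M_tendsto_atTop (a b : ℝ) (ha : 0 < a) (hb : 0 < b) :
    Filter.Tendsto (fun u : ℝ => Real.exp (a*u - b*Real.exp (2*u))) Filter.atTop (nhds 0) := by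
  have hmaj : ∀ u : ℝ, 0 ≤ u → Real.exp (a*u - b*Real.exp (2*u)) ≤ Real.exp (a*u - b*u^2) := by
    intro u hu
    apply Real.exp_le_exp.mpr
    have h1 : u ≤ Real.exp u := by linarith [Real.add_one_le_exp u]
    have h2 : u^2 ≤ Real.exp (2*u) := by
      rw [two_mul, Real.exp_add, sq]
      exact mul_le_mul h1 h1 hu (Real.exp_pos u).le
    nlinarith
  have hlim : Filter.Tendsto (fun u : ℝ => Real.exp (a*u - b*u^2)) Filter.atTop (nhds 0) := by
    apply Real.tendsto_exp_atBot.comp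
    have : (fun u : ℝ => a*u - b*u^2) = fun u : ℝ => u * (a - b*u) := by funext u; ring
    rw [this]
    apply Filter.Tendsto.atTop_mul_atBot₀ Filter.tendsto_id
    apply Filter.tendsto_atBot_add_const_left _ a
    exact (Filter.tendsto_neg_atBot_iff.mpr ((Filter.tendsto_const_mul_atTop_of_pos hb).mpr
      Filter.tendsto_id)).congr (fun u => by simp)
  apply tendsto_of_tendsto_of_tendsto_of_le_of_le' tendsto_const_nhds hlim
    (Filter.Eventually.of_forall fun u => (Real.exp_pos _).le)
    ((Filter.eventually_ge_atTop (0:ℝ)).mono hmaj)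

lemma strip_shift (F : ℂ → ℂ) (hF : Differentiable ℂ F)
    (q : ℝ) (hq1 : 1 < q) (hq2 : q ≤ 2)
    (hgrow : ∀ ε > (0:ℝ), ∃ A ≥ (0:ℝ), ∀ Z : ℂ, ‖F Z‖ ≤ A * Real.exp (ε * ‖Z‖ ^ q))
    (χ : ℝ) (hχ : -1 < χ) (c : ℝ) (hc : 0 < c) (θ : ℝ)
    (hθ1 : -(Real.pi/4) < θ) (hθ2 : θ < Real.pi/4) :
    Integrable (fun x : ℝ => gAux F χ c (x + θ*Complex.I)) ∧
    ∫ x : ℝ, gAux F χ c (x + θ*Complex.I) = ∫ x : ℝ, gAux F χ c x := by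
  have hπ := Real.pi_pos
  set δ := Real.cos (2*θ) with hδdef
  have hδ : 0 < δ := Real.cos_pos_of_mem_Ioo ⟨by linarith, by linarith⟩
  obtain ⟨A, hA, hFb⟩ := hgrow (c*δ/2) (by positivity)
  have habs : |θ| < Real.pi/4 := abs_lt.mpr ⟨hθ1, hθ2⟩
  have hcos : ∀ y : ℝ, |y| ≤ |θ| → δ ≤ Real.cos (2*y) := by
    intro y hy
    have h1 : Real.cos (2*|θ|) ≤ Real.cos (2*|y|) := by
      apply Real.cos_le_cos_of_nonneg_of_le_pi (by positivity) (by linarith [abs_nonneg θ])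
      linarith
    calc δ = Real.cos (2*|θ|) := by
            rw [hδdef, show (2:ℝ)*|θ| = |2*θ| by rw [abs_mul, _root_.abs_two], Real.cos_abs]
      _ ≤ Real.cos (2*|y|) := h1
      _ = Real.cos (2*y) := by
            rw [show (2:ℝ)*|y| = |2*y| by rw [abs_mul, _root_.abs_two], Real.cos_abs]
  set CA := A * Real.exp (c*δ/2) with hCA
  set M : ℝ → ℝ := fun u => Real.exp ((χ+1)*u - (c*δ/2)*Real.exp (2*u)) with hM
  have hbd : ∀ (x y : ℝ), |y| ≤ |θ| → ‖gAux F χ c (x + y*Complex.I)‖ ≤ CA * M x := by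
    intro x y hy
    have him : ((x:ℂ) + y*Complex.I).im = y := by simp
    have hre : ((x:ℂ) + y*Complex.I).re = x := by simp
    have := gAux_bound F q hq1 hq2 χ c hc δ hδ A (c*δ/2) hA rfl hFb
      ((x:ℂ) + y*Complex.I) (by rw [him]; exact hcos y hy)
    rw [hre] at this
    exact this
  have hMint : Integrable M := M_integrable _ _ (by linarith) (by positivity)
  have hMint' : Integrable (fun u => CA * M u) := hMint.const_mul CA
  have hline : ∀ y : ℝ, |y| ≤ |θ| → Integrable (fun x : ℝ => gAux F χ c (x + y*Complex.I)) := by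
    intro y hy
    refine Integrable.mono' hMint' ?_ (Filter.Eventually.of_forall fun x => hbd x y hy)
    apply Continuous.aestronglyMeasurable
    exact (gAux_diff F hF χ c).continuous.comp (by continuity)
  have hlineθ := hline θ le_rfl
  refine ⟨hlineθ, ?_⟩
  have hline0 : Integrable (fun x : ℝ => gAux F χ c x) := by
    have := hline 0 (by simp)
    refine this.congr (Filter.Eventually.of_forall fun x => ?_)
    norm_num
  -- contour
  set g := gAux F χ c with hg
  have hyabs : ∀ y ∈ Set.uIoc (0:ℝ) θ, |y| ≤ |θ| := by
    intro y hy
    rcases le_or_gt 0 θ with h|h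
    · rw [Set.uIoc_of_le h] at hy; rw [_root_.abs_of_pos hy.1, _root_.abs_of_nonneg h]; exact hy.2
    · rw [Set.uIoc_of_ge h.le] at hy; rw [_root_.abs_of_nonpos hy.2, _root_.abs_of_neg h]; linarith [hy.1]
  have hVbound : ∀ s : ℝ, ‖∫ y in (0:ℝ)..θ, g (s + y*Complex.I)‖ ≤ CA * M s * |θ| := by
    intro s
    have := intervalIntegral.norm_integral_le_of_norm_le_const
      (C := CA * M s) (f := fun y => g ((s:ℂ) + y*Complex.I)) (a := 0) (b := θ)
      (fun y hy => hbd s y (hyabs y hy))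
    simpa using this
  have hVtop : Filter.Tendsto (fun T : ℝ => ∫ y in (0:ℝ)..θ, g (T + y*Complex.I))
      Filter.atTop (nhds 0) := by
    rw [tendsto_zero_iff_norm_tendsto_zero]
    refine tendsto_of_tendsto_of_tendsto_of_le_of_le' tendsto_const_nhds ?_
      (Filter.Eventually.of_forall fun T => norm_nonneg _)
      (Filter.Eventually.of_forall fun T => hVbound T)
    have := (M_tendsto_atTop (χ+1) (c*δ/2) (by linarith) (by positivity))
    have h0 : (0:ℝ) = CA * 0 * |θ| := by ring
    rw [h0]
    exact (this.const_mul CA).mul_const |θ|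
  have hVbot : Filter.Tendsto (fun T : ℝ => ∫ y in (0:ℝ)..θ, g (-T + y*Complex.I))
      Filter.atTop (nhds 0) := by
    rw [tendsto_zero_iff_norm_tendsto_zero]
    refine tendsto_of_tendsto_of_tendsto_of_le_of_le' tendsto_const_nhds ?_
      (Filter.Eventually.of_forall fun T => norm_nonneg _)
      (Filter.Eventually.of_forall fun T => by
        have := hVbound (-T)
        simpa using this)
    have := (M_tendsto_atBot (χ+1) (c*δ/2) (by linarith) (by positivity)).comp
      Filter.tendsto_neg_atTop_atBot
    have h0 : (0:ℝ) = CA * 0 * |θ| := by ring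
    rw [h0]
    exact ((this.const_mul CA).mul_const |θ|).congr (fun T => by simp [Function.comp, hM])
  have hC : ∀ T : ℝ,
      (∫ x in -T..T, g x) - (∫ x in -T..T, g (x + θ*Complex.I)) +
        Complex.I • (∫ y in (0:ℝ)..θ, g (T + y*Complex.I)) -
        Complex.I • (∫ y in (0:ℝ)..θ, g (-T + y*Complex.I)) = 0 := by
    intro T
    have := integral_boundary_rect_eq_zero_of_differentiableOn g (↑(-T))
      ((T:ℂ) + θ*Complex.I) ((gAux_diff F hF χ c).differentiableOn)
    simpa only [Complex.ofReal_neg, Complex.neg_re, Complex.ofReal_re, Complex.add_re,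
      Complex.mul_re, Complex.I_re, mul_zero, Complex.I_im, Complex.ofReal_im,
      Complex.neg_im, Complex.add_im, Complex.mul_im, mul_zero, mul_one, zero_mul, neg_zero,
      zero_add, add_zero, sub_zero, zero_sub, Complex.ofReal_zero, tsub_zero] using this
  have h1lim : Filter.Tendsto (fun T : ℝ => ∫ x in -T..T, g (x + θ*Complex.I))
      Filter.atTop (nhds (∫ x : ℝ, g (x + θ*Complex.I))) :=
    intervalIntegral_tendsto_integral hlineθ Filter.tendsto_neg_atTop_atBot Filter.tendsto_id
  have h2lim : Filter.Tendsto (fun T : ℝ => ∫ x in -T..T, g x)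
      Filter.atTop (nhds (∫ x : ℝ, g x)) :=
    intervalIntegral_tendsto_integral hline0 Filter.tendsto_neg_atTop_atBot Filter.tendsto_id
  have key : Filter.Tendsto (fun T : ℝ => ∫ x in -T..T, g (x + θ*Complex.I))
      Filter.atTop (nhds (∫ x : ℝ, g x)) := by
    have heq : (fun T : ℝ => ∫ x in -T..T, g (x + θ*Complex.I)) =
        fun T : ℝ => (∫ x in -T..T, g x) +
          (Complex.I • (∫ y in (0:ℝ)..θ, g (T + y*Complex.I)) -
           Complex.I • (∫ y in (0:ℝ)..θ, g (-T + y*Complex.I))) := by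
      funext T
      have h := hC T
      rw [smul_eq_mul, smul_eq_mul] at h ⊢
      linear_combination -h
    rw [heq]
    have : nhds (∫ x : ℝ, g x) = nhds ((∫ x : ℝ, g x) + (Complex.I • (0:ℂ) - Complex.I • (0:ℂ))) := by
      norm_num
    rw [this]
    exact h2lim.add ((hVtop.const_smul Complex.I).sub (hVbot.const_smul Complex.I))
  exact tendsto_nhds_unique h1lim key

lemma subst_pt (F : ℂ → ℂ) (χ c : ℝ) (θ : ℝ) (hθ1 : -Real.pi < θ) (hθ2 : θ ≤ Real.pi) (u : ℝ) :
    |Real.exp u| • ((((Real.exp u : ℝ):ℂ) * Complex.exp (θ*Complex.I)) ^ (χ:ℂ) *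
      Complex.exp (-(c:ℂ) * (((Real.exp u : ℝ):ℂ) * Complex.exp (θ*Complex.I))^2) *
      F (((Real.exp u : ℝ):ℂ) * Complex.exp (θ*Complex.I)) * Complex.exp (θ*Complex.I)) =
    gAux F χ c (u + θ*Complex.I) := by
  set w : ℂ := u + θ*Complex.I with hw
  have h1 : ((Real.exp u : ℝ):ℂ) * Complex.exp (θ*Complex.I) = Complex.exp w := by
    rw [Complex.ofReal_exp, ← Complex.exp_add]
  have him : w.im = θ := by simp [hw]
  have h2 : Complex.exp w ^ (χ:ℂ) = Complex.exp ((χ:ℂ) * w) := by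
    rw [Complex.cpow_def_of_ne_zero (Complex.exp_ne_zero _),
      Complex.log_exp (by rw [him]; exact hθ1) (by rw [him]; exact hθ2), mul_comm]
  have h3 : Complex.exp w ^ 2 = Complex.exp (2 * w) := by
    rw [sq, ← Complex.exp_add, two_mul]
  have h4 : Complex.exp w = Complex.exp (u:ℂ) * Complex.exp (θ*Complex.I) := by
    rw [hw, Complex.exp_add]
  rw [h1, h2, h3, _root_.abs_of_pos (Real.exp_pos u), Complex.real_smul, Complex.ofReal_exp]
  unfold gAux
  rw [show ((χ:ℂ)+1)*w = (χ:ℂ)*w + w from by ring]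
  rw [Complex.exp_add (↑χ * w) w]
  rw [h4]
  ring

lemma subst_main (F : ℂ → ℂ) (χ c : ℝ) (θ : ℝ) (hθ1 : -Real.pi < θ) (hθ2 : θ ≤ Real.pi) :
    (IntegrableOn (fun t : ℝ =>
        ((t:ℂ) * Complex.exp (θ*Complex.I)) ^ (χ:ℂ) *
        Complex.exp (-(c:ℂ) * ((t:ℂ)*Complex.exp (θ*Complex.I))^2) *
        F ((t:ℂ)*Complex.exp (θ*Complex.I)) * Complex.exp (θ*Complex.I)) (Set.Ioi 0) ↔
      Integrable (fun u : ℝ => gAux F χ c (u + θ*Complex.I))) ∧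
    (∫ t in Set.Ioi (0:ℝ),
        ((t:ℂ) * Complex.exp (θ*Complex.I)) ^ (χ:ℂ) *
        Complex.exp (-(c:ℂ) * ((t:ℂ)*Complex.exp (θ*Complex.I))^2) *
        F ((t:ℂ)*Complex.exp (θ*Complex.I)) * Complex.exp (θ*Complex.I)) =
      ∫ u : ℝ, gAux F χ c (u + θ*Complex.I) := by
  have hder : ∀ x ∈ (univ : Set ℝ), HasDerivWithinAt Real.exp (Real.exp x) univ x :=
    fun x _ => (Real.hasDerivAt_exp x).hasDerivWithinAt
  set orig : ℝ → ℂ := fun t : ℝ =>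
      ((t:ℂ) * Complex.exp (θ*Complex.I)) ^ (χ:ℂ) *
      Complex.exp (-(c:ℂ) * ((t:ℂ)*Complex.exp (θ*Complex.I))^2) *
      F ((t:ℂ)*Complex.exp (θ*Complex.I)) * Complex.exp (θ*Complex.I) with horig
  have hpt : ∀ u : ℝ, |Real.exp u| • orig (Real.exp u) = gAux F χ c (u + θ*Complex.I) :=
    fun u => subst_pt F χ c θ hθ1 hθ2 u
  have hiff := integrableOn_image_iff_integrableOn_abs_deriv_smul MeasurableSet.univ hder
    Real.exp_injective.injOn orig
  rw [Set.image_univ, Real.range_exp] at hiff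
  constructor
  · rw [hiff, integrableOn_univ]
    exact integrable_congr (Filter.Eventually.of_forall hpt)
  · have heq := integral_image_eq_integral_abs_deriv_smul MeasurableSet.univ hder
      Real.exp_injective.injOn orig
    rw [Set.image_univ, Real.range_exp, setIntegral_univ] at heq
    rw [heq]
    exact integral_congr_ae (Filter.Eventually.of_forall hpt)
theorem fresnel_ray_independence (F : ℂ → ℂ) (hF : Differentiable ℂ F)
    (q : ℝ) (hq1 : 1 < q) (hq2 : q ≤ 2)
    (hgrow : ∀ ε > (0:ℝ), ∃ A ≥ (0:ℝ), ∀ Z : ℂ, ‖F Z‖ ≤ A * Real.exp (ε * ‖Z‖ ^ q))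
    (χ : ℝ) (hχ : -1 < χ) (c : ℝ) (hc : 0 < c) :
    ∀ θ : ℝ, -(Real.pi / 4) < θ → θ < Real.pi / 4 →
      IntegrableOn (fun t : ℝ =>
          ((t : ℂ) * Complex.exp (θ * Complex.I)) ^ (χ : ℂ) *
            Complex.exp (-(c : ℂ) * ((t : ℂ) * Complex.exp (θ * Complex.I)) ^ 2) *
            F ((t : ℂ) * Complex.exp (θ * Complex.I)) *
            Complex.exp (θ * Complex.I)) (Set.Ioi 0) ∧
      ∫ t in Set.Ioi (0:ℝ),
          ((t : ℂ) * Complex.exp (θ * Complex.I)) ^ (χ : ℂ) *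
            Complex.exp (-(c : ℂ) * ((t : ℂ) * Complex.exp (θ * Complex.I)) ^ 2) *
            F ((t : ℂ) * Complex.exp (θ * Complex.I)) *
            Complex.exp (θ * Complex.I) =
        ∫ t in Set.Ioi (0:ℝ),
          (t : ℂ) ^ (χ : ℂ) * Complex.exp (-(c : ℂ) * (t : ℂ) ^ 2) * F t := by
  intro θ hθ1 hθ2
  have hπ := Real.pi_pos
  obtain ⟨hiffθ, heqθ⟩ := subst_main F χ c θ (by linarith) (by linarith)
  obtain ⟨hiff0, heq0⟩ := subst_main F χ c 0 (by linarith) (by linarith)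
  obtain ⟨hintθ, hshiftθ⟩ := strip_shift F hF q hq1 hq2 hgrow χ hχ c hc θ hθ1 hθ2
  simp only [Complex.ofReal_zero, zero_mul, Complex.exp_zero, mul_one, add_zero] at heq0
  refine ⟨hiffθ.mpr hintθ, ?_⟩
  rw [heqθ, hshiftθ, ← heq0]
end

section
/- Let G : ℂ → ℂ be entire with, for every ε > 0, |G(z)| ≤ C_ε·exp(ε|z|²) for all z ∈ ℂ (i.e., G ∈ A_{2,0}(ℂ)), let χ > −1 and ϖ ∈ ℝ, ϖ ≠ 0. Then the limit lim_{ε→0+} ∫_0^∞ x^χ·exp(iϖx²)·exp(−εx²)·G(x) dx exists. -/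
open MeasureTheory Real Set Complex Filter

lemma cov_exp (g : ℝ → ℂ) :
    (∫ x in Set.Ioi (0:ℝ), g x) = ∫ s : ℝ, Real.exp s • g (Real.exp s) := by
  have h := integral_image_eq_integral_abs_deriv_smul (s := Set.univ) (f := Real.exp)
    (f' := Real.exp) MeasurableSet.univ
    (fun x _ => (Real.hasDerivAt_exp x).hasDerivWithinAt)
    (Real.exp_injective.injOn) g
  rw [Set.image_univ, Real.range_exp] at h
  simpa [abs_of_pos (Real.exp_pos _)] using h

lemma cov_exp_integrable {E : Type*} [NormedAddCommGroup E] [NormedSpace ℝ E] (g : ℝ → E) :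
    IntegrableOn g (Set.Ioi (0:ℝ)) ↔ Integrable (fun s : ℝ => Real.exp s • g (Real.exp s)) := by
  have h := integrableOn_image_iff_integrableOn_abs_deriv_smul (s := Set.univ) (f := Real.exp)
    (f' := Real.exp) MeasurableSet.univ
    (fun x _ => (Real.hasDerivAt_exp x).hasDerivWithinAt)
    (Real.exp_injective.injOn) g
  rw [Set.image_univ, Real.range_exp] at h
  simpa [IntegrableOn, abs_of_pos (Real.exp_pos _)] using h

lemma exp_sq_eq (t : ℝ) : Real.exp t ^ 2 = Real.exp (2*t) := by
  rw [← Real.exp_nat_mul]; norm_num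

lemma majorant_integrable {a b : ℝ} (ha : 0 < a) (hb : 0 < b) :
    Integrable (fun s : ℝ => Real.exp (a * s - b * Real.exp (2 * s))) := by
  have h0 : IntegrableOn (fun x : ℝ => x ^ (a - 1) * Real.exp (-b * x ^ 2)) (Set.Ioi 0) :=
    integrableOn_rpow_mul_exp_neg_mul_sq hb (by linarith)
  have hr : ∀ s : ℝ, Real.exp s • ((Real.exp s) ^ (a-1) * Real.exp (-b * (Real.exp s) ^ 2))
      = Real.exp (a * s - b * Real.exp (2 * s)) := by
    intro s
    rw [smul_eq_mul, exp_sq_eq, Real.rpow_def_of_pos (Real.exp_pos s), Real.log_exp,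
      ← Real.exp_add, ← Real.exp_add]
    congr 1; ring
  have := (cov_exp_integrable (fun x : ℝ => x ^ (a - 1) * Real.exp (-b * x ^ 2))).mp h0
  simpa only [hr] using this

lemma tendsto_exp_aux {b : ℝ} (a : ℝ) (hb : 0 < b) :
    Filter.Tendsto (fun T : ℝ => Real.exp (a*T - b*Real.exp (2*T))) atTop (nhds 0) := by
  have h := (rpow_mul_exp_neg_mul_sq_isLittleO_exp_neg hb a).tendsto_zero_of_tendsto
      (Real.tendsto_exp_atBot.comp <|
        tendsto_id.const_mul_atTop_of_neg (neg_lt_zero.mpr one_half_pos))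
  have h2 := h.comp Real.tendsto_exp_atTop
  refine h2.congr fun T => ?_
  show Real.exp T ^ a * Real.exp (-b * Real.exp T ^ 2) = _
  rw [exp_sq_eq, Real.rpow_def_of_pos (Real.exp_pos T), Real.log_exp, ← Real.exp_add]
  congr 1; ring

noncomputable def Haux (G : ℂ → ℂ) (χ ϖ ε : ℝ) (w : ℂ) : ℂ :=
  Complex.exp (((χ:ℂ)+1)*w + (Complex.I*ϖ - ε) * Complex.exp (2*w)) * G (Complex.exp w)

lemma Haux_diff {G : ℂ → ℂ} (hG : Differentiable ℂ G) (χ ϖ ε : ℝ) :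
    Differentiable ℂ (Haux G χ ϖ ε) := by
  apply Differentiable.mul
  · apply Differentiable.cexp
    exact (differentiable_id.const_mul _).add
      ((Complex.differentiable_exp.comp (differentiable_id.const_mul 2)).const_mul _)
  · exact hG.comp Complex.differentiable_exp

lemma Haux_norm (G : ℂ → ℂ) (χ ϖ ε : ℝ) (w : ℂ) :
    ‖Haux G χ ϖ ε w‖ = Real.exp ((χ+1)*w.re
        + Real.exp (2*w.re) * (-(ϖ * Real.sin (2*w.im)) - ε * Real.cos (2*w.im)))
      * ‖G (Complex.exp w)‖ := by
  rw [Haux, norm_mul]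
  congr 1
  rw [Complex.norm_exp]
  congr 1
  simp [Complex.add_re, Complex.mul_re, Complex.sub_re, Complex.sub_im, Complex.exp_re,
    Complex.exp_im, Complex.mul_im]
  ring

lemma theta_spec {ϖ : ℝ} (hϖ : ϖ ≠ 0) :
    ∃ θ : ℝ, 0 < Real.cos (2*θ) ∧ 0 < ϖ * Real.sin (2*θ) ∧
      ∀ y ∈ Set.uIcc (0:ℝ) θ, 0 ≤ ϖ * Real.sin (2*y) ∧ Real.cos (2*θ) ≤ Real.cos (2*y) := by
  have hπ := Real.pi_pos
  have hcos : 0 < Real.cos (π/4) := by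
    apply Real.cos_pos_of_mem_Ioo
    constructor <;> nlinarith
  have hsin : 0 < Real.sin (π/4) := by
    apply Real.sin_pos_of_pos_of_lt_pi <;> nlinarith
  have key : ∀ u ∈ Set.Icc (0:ℝ) (π/4), 0 ≤ Real.sin u ∧ Real.cos (π/4) ≤ Real.cos u := by
    rintro u ⟨h0, h1⟩
    refine ⟨Real.sin_nonneg_of_nonneg_of_le_pi h0 (by nlinarith), ?_⟩
    exact Real.cos_le_cos_of_nonneg_of_le_pi h0 (by nlinarith) h1
  rcases lt_or_gt_of_ne hϖ with hneg | hpos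
  · refine ⟨-(π/8), by rw [show 2 * -(π/8) = -(π/4) by ring, Real.cos_neg]; exact hcos, ?_, ?_⟩
    · rw [show 2 * -(π/8) = -(π/4) by ring, Real.sin_neg]
      nlinarith
    · intro y hy
      rw [Set.uIcc_of_ge (by nlinarith)] at hy
      obtain ⟨h0, h1⟩ := hy
      have hk := key (-(2*y)) ⟨by linarith, by linarith⟩
      rw [Real.sin_neg, Real.cos_neg] at hk
      rw [show 2 * -(π/8) = -(π/4) by ring, Real.cos_neg]
      constructor
      · nlinarith [hk.1]
      · exact hk.2
  · refine ⟨π/8, by rw [show 2 * (π/8) = π/4 by ring]; exact hcos, ?_, ?_⟩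
    · rw [show 2 * (π/8) = π/4 by ring]; nlinarith
    · intro y hy
      rw [Set.uIcc_of_le (by nlinarith)] at hy
      obtain ⟨h0, h1⟩ := hy
      have hk := key (2*y) ⟨by linarith, by linarith⟩
      rw [show 2 * (π/8) = π/4 by ring]
      exact ⟨by nlinarith [hk.1], hk.2⟩

set_option maxHeartbeats 1000000 in
theorem fresnel_regularization_limit_exists (G : ℂ → ℂ) (hG : Differentiable ℂ G)
    (hgrow : ∀ ε > (0:ℝ), ∃ Cε : ℝ, ∀ z : ℂ, ‖G z‖ ≤ Cε * Real.exp (ε * ‖z‖ ^ 2))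
    (χ : ℝ) (hχ : -1 < χ) (ϖ : ℝ) (hϖ : ϖ ≠ 0) :
    ∃ L : ℂ, Filter.Tendsto
      (fun ε : ℝ => ∫ x in Set.Ioi (0:ℝ),
        (x : ℂ) ^ (χ : ℂ) * Complex.exp (Complex.I * ϖ * (x : ℂ) ^ 2) *
          Complex.exp (-(ε : ℂ) * (x : ℂ) ^ 2) * G x)
      (nhdsWithin 0 (Set.Ioi 0)) (nhds L) := by
  obtain ⟨θ, hcθ, hc, hseg⟩ := theta_spec hϖ
  set c : ℝ := ϖ * Real.sin (2*θ) with hc_def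
  have hχ1 : (0:ℝ) < χ + 1 := by linarith
  obtain ⟨C, hC⟩ := hgrow (c/2) (half_pos hc)
  have hC0 : (0:ℝ) ≤ C := le_trans (norm_nonneg (G 0)) (by simpa using hC 0)
  -- norm of exp of complex, squared
  have hGnorm : ∀ (δ Cδ : ℝ), (∀ z, ‖G z‖ ≤ Cδ * Real.exp (δ * ‖z‖^2)) →
      ∀ w : ℂ, ‖G (Complex.exp w)‖ ≤ Cδ * Real.exp (δ * Real.exp (2*w.re)) := by
    intro δ Cδ h w
    have := h (Complex.exp w)
    rwa [show ‖Complex.exp w‖ = Real.exp w.re from by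
      rw [Complex.norm_exp], exp_sq_eq] at this
  -- the uniform bound on the shifted line
  set bound : ℝ → ℝ := fun s => C * Real.exp ((χ+1)*s - c/2 * Real.exp (2*s)) with hbound_def
  have hbound_int : Integrable bound := (majorant_integrable hχ1 (half_pos hc)).const_mul C
  have hline : ∀ ε : ℝ, 0 ≤ ε → ∀ s : ℝ, ‖Haux G χ ϖ ε ((s:ℂ) + θ*Complex.I)‖ ≤ bound s := by
    intro ε hε s
    rw [Haux_norm]
    have h1 : ((s:ℂ) + θ*Complex.I).re = s := by simp
    have h2 : ((s:ℂ) + θ*Complex.I).im = θ := by simp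
    rw [h1, h2]
    have hG1 : ‖G (Complex.exp ((s:ℂ)+θ*Complex.I))‖ ≤ C * Real.exp (c/2 * Real.exp (2*s)) := by
      have := hGnorm (c/2) C hC ((s:ℂ)+θ*Complex.I)
      rwa [h1] at this
    calc Real.exp ((χ+1)*s + Real.exp (2*s) * (-(ϖ * Real.sin (2*θ)) - ε * Real.cos (2*θ)))
          * ‖G (Complex.exp ((s:ℂ)+θ*Complex.I))‖
        ≤ Real.exp ((χ+1)*s + Real.exp (2*s) * (-(ϖ * Real.sin (2*θ)) - ε * Real.cos (2*θ)))
          * (C * Real.exp (c/2 * Real.exp (2*s))) := by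
          exact mul_le_mul_of_nonneg_left hG1 (Real.exp_pos _).le
      _ = C * Real.exp (((χ+1)*s + Real.exp (2*s) * (-(ϖ * Real.sin (2*θ)) - ε * Real.cos (2*θ)))
            + c/2 * Real.exp (2*s)) := by rw [mul_left_comm, ← Real.exp_add]
      _ ≤ bound s := by
          apply mul_le_mul_of_nonneg_left _ hC0
          apply Real.exp_le_exp.2
          have h3 : 0 ≤ ε * Real.cos (2*θ) := mul_nonneg hε hcθ.le
          have h4 := Real.exp_pos (2*s)
          rw [← hc_def]
          nlinarith
  -- continuity/measurability of the line function
  have hcont_line : ∀ ε : ℝ, Continuous (fun s : ℝ => Haux G χ ϖ ε ((s:ℂ) + θ*Complex.I)) := by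
    intro ε
    exact (Haux_diff hG χ ϖ ε).continuous.comp
      (by continuity)
  have hint_line : ∀ ε : ℝ, 0 ≤ ε →
      Integrable (fun s : ℝ => Haux G χ ϖ ε ((s:ℂ) + θ*Complex.I)) :=
    fun ε hε => Integrable.mono' hbound_int (hcont_line ε).aestronglyMeasurable
      (Filter.Eventually.of_forall (hline ε hε))
  -- integrability on the real line for ε > 0
  have hint_real : ∀ ε : ℝ, 0 < ε → Integrable (fun s : ℝ => Haux G χ ϖ ε (s:ℂ)) := by
    intro ε hε
    obtain ⟨C', hC'⟩ := hgrow (ε/2) (half_pos hε)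
    have hC'0 : (0:ℝ) ≤ C' := le_trans (norm_nonneg (G 0)) (by simpa using hC' 0)
    apply Integrable.mono' ((majorant_integrable hχ1 (half_pos hε)).const_mul C')
    · exact ((Haux_diff hG χ ϖ ε).continuous.comp Complex.continuous_ofReal).aestronglyMeasurable
    · refine Filter.Eventually.of_forall fun s => ?_
      rw [Haux_norm]
      have h1 : ((s:ℂ)).re = s := rfl
      have h2 : ((s:ℂ)).im = 0 := rfl
      rw [h1, h2]
      simp only [mul_zero, Real.sin_zero, Real.cos_zero, mul_one, neg_zero, zero_sub]
      have hG1 : ‖G (Complex.exp (s:ℂ))‖ ≤ C' * Real.exp (ε/2 * Real.exp (2*s)) := by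
        have := hGnorm (ε/2) C' hC' (s:ℂ); rwa [h1] at this
      calc Real.exp ((χ+1)*s + Real.exp (2*s) * -ε) * ‖G (Complex.exp (s:ℂ))‖
          ≤ Real.exp ((χ+1)*s + Real.exp (2*s) * -ε) * (C' * Real.exp (ε/2 * Real.exp (2*s))) :=
            mul_le_mul_of_nonneg_left hG1 (Real.exp_pos _).le
        _ = C' * Real.exp (((χ+1)*s + Real.exp (2*s) * -ε) + ε/2 * Real.exp (2*s)) := by
            rw [mul_left_comm, ← Real.exp_add]
        _ ≤ C' * Real.exp ((χ+1)*s - ε/2 * Real.exp (2*s)) := by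
            apply mul_le_mul_of_nonneg_left _ hC'0
            apply Real.exp_le_exp.2
            nlinarith [Real.exp_pos (2*s), hε.le]
  -- change of variables x = exp s
  have hcov : ∀ ε : ℝ,
      (∫ x in Set.Ioi (0:ℝ), (x : ℂ) ^ (χ : ℂ) * Complex.exp (Complex.I * ϖ * (x : ℂ) ^ 2) *
          Complex.exp (-(ε : ℂ) * (x : ℂ) ^ 2) * G x)
      = ∫ s : ℝ, Haux G χ ϖ ε (s:ℂ) := by
    intro ε
    rw [cov_exp]
    congr 1
    funext s
    have e1 : ((Real.exp s : ℝ) : ℂ) = Complex.exp (s:ℂ) := (Complex.ofReal_exp s).symm ▸ rfl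
    have e2 : ((Real.exp s : ℝ) : ℂ)^2 = Complex.exp (2*(s:ℂ)) := by
      rw [e1, pow_two, ← Complex.exp_add, ← two_mul]
    have e3 : ((Real.exp s : ℝ) : ℂ)^(χ:ℂ) = Complex.exp ((χ:ℂ)*(s:ℂ)) := by
      rw [e1, Complex.cpow_def_of_ne_zero (Complex.exp_ne_zero _),
        Complex.log_exp (by simpa using Real.pi_pos) (by simpa using Real.pi_pos.le), mul_comm]
    rw [Haux, Complex.real_smul, e3, e2, e1]
    rw [show ((χ:ℂ)+1)*(s:ℂ) + (Complex.I*ϖ - ε)*Complex.exp (2*(s:ℂ))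
        = (s:ℂ) + ((χ:ℂ)*(s:ℂ) + (Complex.I*ϖ*Complex.exp (2*(s:ℂ))
          + (-(ε:ℂ))*Complex.exp (2*(s:ℂ)))) from by ring,
      Complex.exp_add, Complex.exp_add, Complex.exp_add]
    ring
  -- contour shift: for ε > 0 the real-line integral equals the shifted-line integral
  have hIdent : ∀ ε : ℝ, 0 < ε →
      (∫ s : ℝ, Haux G χ ϖ ε (s:ℂ)) = ∫ s : ℝ, Haux G χ ϖ ε ((s:ℂ) + θ*Complex.I) := by
    intro ε hε
    have hb2 : 0 < ε * Real.cos (2*θ) / 2 := by positivity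
    obtain ⟨C2, hC2⟩ := hgrow (ε * Real.cos (2*θ)/2) hb2
    have hC20 : (0:ℝ) ≤ C2 := le_trans (norm_nonneg (G 0)) (by simpa using hC2 0)
    obtain ⟨C1, hC1⟩ := hgrow 1 one_pos
    have hC10 : (0:ℝ) ≤ C1 := le_trans (norm_nonneg (G 0)) (by simpa using hC1 0)
    have rect : ∀ T : ℝ, (∫ x in -T..T, Haux G χ ϖ ε (x:ℂ))
        = (∫ x in -T..T, Haux G χ ϖ ε ((x:ℂ) + θ*Complex.I))
          - Complex.I * (∫ y in (0:ℝ)..θ, Haux G χ ϖ ε ((T:ℂ) + (y:ℂ)*Complex.I))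
          + Complex.I * (∫ y in (0:ℝ)..θ, Haux G χ ϖ ε (-(T:ℂ) + (y:ℂ)*Complex.I)) := by
      intro T
      have h0 := Complex.integral_boundary_rect_eq_zero_of_differentiableOn
        (Haux G χ ϖ ε) (-(T:ℂ)) ((T:ℂ) + θ*Complex.I)
        ((Haux_diff hG χ ϖ ε).differentiableOn)
      simp only [Complex.neg_re, Complex.ofReal_re, Complex.neg_im, Complex.ofReal_im, neg_zero,
        Complex.add_re, Complex.add_im, Complex.mul_re, Complex.mul_im, Complex.I_re,
        Complex.I_im, mul_zero, mul_one, zero_mul, sub_zero, zero_add, add_zero,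
        Complex.ofReal_zero, Complex.ofReal_neg, smul_eq_mul] at h0
      linear_combination h0
    have t1 := MeasureTheory.intervalIntegral_tendsto_integral (hint_real ε hε)
      tendsto_neg_atTop_atBot tendsto_id
    have t2 := MeasureTheory.intervalIntegral_tendsto_integral (hint_line ε hε.le)
      tendsto_neg_atTop_atBot tendsto_id
    -- right vertical side
    have t3 : Filter.Tendsto (fun T : ℝ => ∫ y in (0:ℝ)..θ, Haux G χ ϖ ε ((T:ℂ) + (y:ℂ)*Complex.I))
        atTop (nhds 0) := by
      apply squeeze_zero_norm'
        (a := fun T => (C2 * Real.exp ((χ+1)*T - (ε * Real.cos (2*θ)/2) * Real.exp (2*T))) * |θ - 0|)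
      · refine Filter.Eventually.of_forall fun T => ?_
        apply intervalIntegral.norm_integral_le_of_norm_le_const
        intro y hy
        have hy' := hseg y (Set.uIoc_subset_uIcc hy)
        rw [Haux_norm]
        have h1 : ((T:ℂ) + (y:ℂ)*Complex.I).re = T := by simp
        have h2 : ((T:ℂ) + (y:ℂ)*Complex.I).im = y := by simp
        rw [h1, h2]
        have hG1 : ‖G (Complex.exp ((T:ℂ) + (y:ℂ)*Complex.I))‖
            ≤ C2 * Real.exp ((ε * Real.cos (2*θ)/2) * Real.exp (2*T)) := by
          have := hGnorm (ε * Real.cos (2*θ)/2) C2 hC2 ((T:ℂ) + (y:ℂ)*Complex.I)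
          rwa [h1] at this
        calc Real.exp ((χ+1)*T + Real.exp (2*T) * (-(ϖ * Real.sin (2*y)) - ε * Real.cos (2*y)))
              * ‖G (Complex.exp ((T:ℂ) + (y:ℂ)*Complex.I))‖
            ≤ Real.exp ((χ+1)*T + Real.exp (2*T) * (-(ε * Real.cos (2*θ))))
              * (C2 * Real.exp ((ε * Real.cos (2*θ)/2) * Real.exp (2*T))) := by
              apply mul_le_mul _ hG1 (norm_nonneg _) (Real.exp_pos _).le
              apply Real.exp_le_exp.2
              have h3 : ε * Real.cos (2*θ) ≤ ε * Real.cos (2*y) :=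
                mul_le_mul_of_nonneg_left hy'.2 hε.le
              have h4 := (Real.exp_pos (2*T)).le
              nlinarith [hy'.1]
          _ = C2 * Real.exp (((χ+1)*T + Real.exp (2*T) * (-(ε * Real.cos (2*θ))))
                + (ε * Real.cos (2*θ)/2) * Real.exp (2*T)) := by
              rw [mul_left_comm, ← Real.exp_add]
          _ ≤ C2 * Real.exp ((χ+1)*T - (ε * Real.cos (2*θ)/2) * Real.exp (2*T)) := by
              apply mul_le_mul_of_nonneg_left _ hC20
              apply Real.exp_le_exp.2
              nlinarith [Real.exp_pos (2*T)]
      · have := ((tendsto_exp_aux (χ+1) hb2).const_mul C2).mul_const |θ - 0|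
        simpa using this
    -- left vertical side
    have t4 : Filter.Tendsto (fun T : ℝ => ∫ y in (0:ℝ)..θ, Haux G χ ϖ ε (-(T:ℂ) + (y:ℂ)*Complex.I))
        atTop (nhds 0) := by
      apply squeeze_zero_norm'
        (a := fun T => (C1 * Real.exp 1 * Real.exp (|ϖ| + ε) * Real.exp ((-(χ+1))*T)) * |θ - 0|)
      · filter_upwards [Filter.eventually_ge_atTop (0:ℝ)] with T hT
        apply intervalIntegral.norm_integral_le_of_norm_le_const
        intro y hy
        rw [Haux_norm]
        have h1 : (-(T:ℂ) + (y:ℂ)*Complex.I).re = -T := by simp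
        have h2 : (-(T:ℂ) + (y:ℂ)*Complex.I).im = y := by simp
        rw [h1, h2]
        have hE1 : Real.exp (2*(-T)) ≤ 1 := Real.exp_le_one_iff.2 (by linarith)
        have hE0 : (0:ℝ) < Real.exp (2*(-T)) := Real.exp_pos _
        have hq : -(ϖ * Real.sin (2*y)) - ε * Real.cos (2*y) ≤ |ϖ| + ε := by
          have hs1 := Real.neg_one_le_sin (2*y)
          have hs2 := Real.sin_le_one (2*y)
          have hc1 := Real.neg_one_le_cos (2*y)
          have hc2 := Real.cos_le_one (2*y)
          have := le_abs_self ϖ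
          have := neg_abs_le ϖ
          nlinarith [hε.le]
        have hq2 : Real.exp (2*(-T)) * (-(ϖ * Real.sin (2*y)) - ε * Real.cos (2*y))
            ≤ |ϖ| + ε := by
          set q := -(ϖ * Real.sin (2*y)) - ε * Real.cos (2*y) with hqdef
          rcases le_or_gt q 0 with h | h
          · have : Real.exp (2*(-T)) * q ≤ 0 := mul_nonpos_of_nonneg_of_nonpos hE0.le h
            have : (0:ℝ) ≤ |ϖ| + ε := by positivity
            linarith [mul_nonpos_of_nonneg_of_nonpos hE0.le h]
          · nlinarith
        have hG1 : ‖G (Complex.exp (-(T:ℂ) + (y:ℂ)*Complex.I))‖ ≤ C1 * Real.exp 1 := by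
          have := hGnorm 1 C1 hC1 (-(T:ℂ) + (y:ℂ)*Complex.I)
          rw [h1] at this
          refine this.trans ?_
          apply mul_le_mul_of_nonneg_left _ hC10
          apply Real.exp_le_exp.2
          simpa using hE1
        calc Real.exp ((χ+1)*(-T) + Real.exp (2*(-T)) * (-(ϖ * Real.sin (2*y)) - ε * Real.cos (2*y)))
              * ‖G (Complex.exp (-(T:ℂ) + (y:ℂ)*Complex.I))‖
            ≤ Real.exp ((χ+1)*(-T) + (|ϖ| + ε)) * (C1 * Real.exp 1) := by
              apply mul_le_mul _ hG1 (norm_nonneg _) (Real.exp_pos _).le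
              apply Real.exp_le_exp.2
              linarith [hq2]
          _ = C1 * Real.exp 1 * Real.exp (|ϖ| + ε) * Real.exp ((-(χ+1))*T) := by
              rw [Real.exp_add, show (χ+1)*(-T) = (-(χ+1))*T by ring]
              ring
      · have hT0 : Filter.Tendsto (fun T:ℝ => Real.exp ((-(χ+1))*T)) atTop (nhds 0) :=
          Real.tendsto_exp_atBot.comp (tendsto_id.const_mul_atTop_of_neg (by linarith))
        have := ((hT0.const_mul (C1 * Real.exp 1 * Real.exp (|ϖ| + ε)))).mul_const |θ - 0|
        simpa [mul_comm, mul_assoc] using this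
    have comb : Filter.Tendsto (fun T : ℝ =>
        ((∫ x in -T..T, Haux G χ ϖ ε ((x:ℂ) + θ*Complex.I))
          - Complex.I * (∫ y in (0:ℝ)..θ, Haux G χ ϖ ε ((T:ℂ) + (y:ℂ)*Complex.I)))
          + Complex.I * (∫ y in (0:ℝ)..θ, Haux G χ ϖ ε (-(T:ℂ) + (y:ℂ)*Complex.I)))
        atTop (nhds (((∫ s : ℝ, Haux G χ ϖ ε ((s:ℂ) + θ*Complex.I)) - Complex.I * 0)
          + Complex.I * 0)) :=
      (t2.sub (t3.const_mul Complex.I)).add (t4.const_mul Complex.I)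
    rw [mul_zero, sub_zero, add_zero] at comb
    exact tendsto_nhds_unique t1 (comb.congr fun T => (rect T).symm)
  -- assemble
  refine ⟨∫ s : ℝ, Haux G χ ϖ 0 ((s:ℂ) + θ*Complex.I), ?_⟩
  have main : Filter.Tendsto (fun ε : ℝ => ∫ s : ℝ, Haux G χ ϖ ε ((s:ℂ) + θ*Complex.I))
      (nhdsWithin 0 (Set.Ioi 0)) (nhds (∫ s : ℝ, Haux G χ ϖ 0 ((s:ℂ) + θ*Complex.I))) := by
    apply MeasureTheory.tendsto_integral_filter_of_dominated_convergence bound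
    · exact Filter.Eventually.of_forall fun ε => (hcont_line ε).aestronglyMeasurable
    · filter_upwards [self_mem_nhdsWithin] with ε hε
      exact Filter.Eventually.of_forall (hline ε (le_of_lt hε))
    · exact hbound_int
    · refine Filter.Eventually.of_forall fun s => ?_
      have hc2 : Continuous (fun ε : ℝ => Haux G χ ϖ ε ((s:ℂ) + θ*Complex.I)) := by
        unfold Haux
        apply Continuous.mul _ continuous_const
        apply Continuous.cexp
        exact continuous_const.add
          ((continuous_const.sub Complex.continuous_ofReal).mul continuous_const)
      exact (hc2.tendsto 0).mono_left nhdsWithin_le_nhds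
  apply main.congr'
  filter_upwards [self_mem_nhdsWithin] with ε hε
  rw [← hIdent ε hε, ← hcov ε]
end

section
/- Let P ∈ ℂ[X], a ∈ ℝ, C_j(N,a) = binom(N,j)((1+a)/2)^{N−j}((1−a)/2)^j, and ψ_N(t,x) = Σ_{j=0}^N C_j(N,a)·exp(i·P(1−2j/N)·t)·exp(i·(1−2j/N)·x). Then for every compact set K ⊂ ℝ², ψ_N converges uniformly on K to (t,x) ↦ exp(i·P(a)·t)·exp(i·a·x) as N → ∞. -/
open Finset

lemma binom_to_sets (N : ℕ) (u v : ℂ) (F : ℕ → ℂ) :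
    ∑ j ∈ Finset.range (N+1), (N.choose j : ℂ) * u^(N-j) * v^j * F j
      = ∑ S : Finset (Fin N), u^(N - #S) * v^(#S) * F (#S) := by
  rw [← Finset.powerset_univ, Finset.sum_powerset]
  rw [Finset.card_univ, Fintype.card_fin]
  refine Finset.sum_congr rfl fun j hj => ?_
  calc ((N.choose j : ℂ)) * u^(N-j) * v^j * F j
      = ∑ S ∈ Finset.powersetCard j (Finset.univ : Finset (Fin N)), u^(N-j) * v^j * F j := by
        rw [Finset.sum_const, Finset.card_powersetCard, Finset.card_univ, Fintype.card_fin,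
          nsmul_eq_mul]; ring
    _ = ∑ S ∈ Finset.powersetCard j (Finset.univ : Finset (Fin N)), u^(N - #S) * v^(#S) * F (#S) := by
        refine Finset.sum_congr rfl fun S hS => ?_
        rw [(Finset.mem_powersetCard.mp hS).2]

/-- number of elements in the fiber of `f` over `i` -/
def fib {s N : ℕ} (f : Fin s → Fin N) (i : Fin N) : ℕ :=
  #(Finset.univ.filter fun k => f k = i)

lemma moment_id (a : ℝ) (N s : ℕ) :
    ∑ j ∈ Finset.range (N+1), (N.choose j : ℂ) * ((1+(a:ℂ))/2)^(N-j) * ((1-(a:ℂ))/2)^j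
        * ((N:ℂ) - 2*j)^s
      = ∑ f : Fin s → Fin N, ∏ i : Fin N, (if Even (fib f i) then (1:ℂ) else (a:ℂ)) := by
  set u : ℂ := (1+(a:ℂ))/2 with hu
  set v : ℂ := (1-(a:ℂ))/2 with hv
  rw [binom_to_sets N u v (fun j => ((N:ℂ) - 2*j)^s)]
  have hW : ∀ S : Finset (Fin N), u^(N - #S) * v^(#S) = ∏ i : Fin N, (if i ∈ S then v else u) := by
    intro S
    rw [Finset.prod_ite (fun _ => v) (fun _ => u), Finset.prod_const, Finset.prod_const]
    have h1 : Finset.univ.filter (fun i : Fin N => i ∈ S) = S := by simp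
    have h2 : Finset.univ.filter (fun i : Fin N => ¬ i ∈ S) = Sᶜ := by ext i; simp
    rw [h1, h2, Finset.card_compl, Fintype.card_fin, mul_comm]
  have hY : ∀ S : Finset (Fin N), ((N:ℂ) - 2*#S) = ∑ i : Fin N, (if i ∈ S then (-1:ℂ) else 1) := by
    intro S
    rw [Finset.sum_ite (fun _ => (-1:ℂ)) (fun _ => 1), Finset.sum_const, Finset.sum_const]
    have h1 : Finset.univ.filter (fun i : Fin N => i ∈ S) = S := by simp
    have h2 : Finset.univ.filter (fun i : Fin N => ¬ i ∈ S) = Sᶜ := by ext i; simp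
    have hle : #S ≤ N := by simpa using Finset.card_le_card (Finset.subset_univ S)
    rw [h1, h2, Finset.card_compl, Fintype.card_fin, nsmul_eq_mul, nsmul_eq_mul,
      Nat.cast_sub hle]
    ring
  calc ∑ S : Finset (Fin N), u^(N - #S) * v^(#S) * ((N:ℂ) - 2*#S)^s
      = ∑ S : Finset (Fin N), ∑ f : Fin s → Fin N,
          (∏ i : Fin N, (if i ∈ S then v else u)) * ∏ k : Fin s, (if f k ∈ S then (-1:ℂ) else 1) := by
        refine Finset.sum_congr rfl fun S _ => ?_
        rw [hW S, hY S, Finset.sum_pow', Fintype.piFinset_univ, Finset.mul_sum]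
    _ = ∑ f : Fin s → Fin N, ∑ S : Finset (Fin N),
          ∏ i : Fin N, (if i ∈ S then v * (-1:ℂ)^(fib f i) else u) := by
        rw [Finset.sum_comm]
        refine Finset.sum_congr rfl fun f _ => Finset.sum_congr rfl fun S _ => ?_
        have hcomp : ∏ k : Fin s, (if f k ∈ S then (-1:ℂ) else 1)
            = ∏ i : Fin N, (if i ∈ S then (-1:ℂ) else 1) ^ (fib f i) := by
          rw [Finset.prod_comp (fun i : Fin N => if i ∈ S then (-1:ℂ) else 1) f]
          refine Finset.prod_subset (Finset.subset_univ _) fun i _ hi => ?_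
          have : fib f i = 0 := by
            rw [fib, Finset.card_eq_zero, Finset.filter_eq_empty_iff]
            intro k _
            exact fun h => hi (Finset.mem_image.mpr ⟨k, Finset.mem_univ k, h⟩)
          rw [show #(Finset.univ.filter fun a => f a = i) = 0 from this, pow_zero]
        rw [hcomp, ← Finset.prod_mul_distrib]
        refine Finset.prod_congr rfl fun i _ => ?_
        split_ifs <;> simp
    _ = ∑ f : Fin s → Fin N, ∏ i : Fin N, (v * (-1:ℂ)^(fib f i) + u) := by
        refine Finset.sum_congr rfl fun f _ => ?_
        rw [Finset.prod_add, ← Finset.powerset_univ]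
        refine (Finset.sum_congr rfl fun S hS => ?_).symm
        rw [Finset.prod_ite (fun i => v * (-1:ℂ)^(fib f i)) (fun _ => u)]
        have h1 : Finset.univ.filter (fun i : Fin N => i ∈ S) = S := by simp
        have h2 : Finset.univ.filter (fun i : Fin N => ¬ i ∈ S) = Sᶜ := by ext i; simp
        rw [h1, h2, Finset.prod_const, Finset.compl_eq_univ_sdiff, Finset.prod_const]
    _ = ∑ f : Fin s → Fin N, ∏ i : Fin N, (if Even (fib f i) then (1:ℂ) else (a:ℂ)) := by
        refine Finset.sum_congr rfl fun f _ => Finset.prod_congr rfl fun i _ => ?_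
        by_cases h : Even (fib f i)
        · rw [if_pos h, h.neg_one_pow, hu, hv]; ring
        · rw [if_neg h, (Nat.not_even_iff_odd.mp h).neg_one_pow, hu, hv]; ring

lemma fib_sum {s N : ℕ} (f : Fin s → Fin N) : ∑ i : Fin N, fib f i = s := by
  have := Finset.card_eq_sum_card_fiberwise (f := f) (s := Finset.univ) (t := Finset.univ)
    (fun x _ => Finset.mem_univ _)
  simpa [fib, Finset.card_univ] using this.symm

lemma prod_fib_bound (a : ℝ) {s N : ℕ} (f : Fin s → Fin N) :
    ‖∏ i : Fin N, (if Even (fib f i) then (1:ℂ) else (a:ℂ))‖ ≤ (max 1 |a|)^s := by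
  set A := max 1 |a| with hA
  have hA1 : (1:ℝ) ≤ A := le_max_left _ _
  rw [norm_prod]
  calc ∏ i : Fin N, ‖(if Even (fib f i) then (1:ℂ) else (a:ℂ))‖
      ≤ ∏ i : Fin N, A ^ (fib f i) := by
        refine Finset.prod_le_prod (fun _ _ => norm_nonneg _) fun i _ => ?_
        by_cases h : Even (fib f i)
        · rw [if_pos h, norm_one]
          exact one_le_pow₀ hA1
        · rw [if_neg h, Complex.norm_real, Real.norm_eq_abs]
          have hc : fib f i ≠ 0 := by
            intro h0; exact h (h0 ▸ Even.zero)
          exact (le_max_right 1 |a|).trans (le_self_pow₀ hA1 hc)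
    _ = A ^ s := by rw [Finset.prod_pow_eq_pow_sum, fib_sum]

lemma prod_fib_inj (a : ℝ) {s N : ℕ} (f : Fin s → Fin N) (hf : Function.Injective f) :
    ∏ i : Fin N, (if Even (fib f i) then (1:ℂ) else (a:ℂ)) = (a:ℂ)^s := by
  have h1 : ∏ i : Fin N, (if Even (fib f i) then (1:ℂ) else (a:ℂ))
      = ∏ i ∈ Finset.image f Finset.univ, (if Even (fib f i) then (1:ℂ) else (a:ℂ)) := by
    refine (Finset.prod_subset (Finset.subset_univ _) fun i _ hi => ?_).symm
    have : fib f i = 0 := by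
      rw [fib, Finset.card_eq_zero, Finset.filter_eq_empty_iff]
      exact fun k _ h => hi (Finset.mem_image.mpr ⟨k, Finset.mem_univ k, h⟩)
    rw [this, if_pos Even.zero]
  rw [h1]
  have h2 : ∀ i ∈ Finset.image f Finset.univ, (if Even (fib f i) then (1:ℂ) else (a:ℂ)) = (a:ℂ) := by
    intro i hi
    obtain ⟨k, _, rfl⟩ := Finset.mem_image.mp hi
    have : fib f (f k) = 1 := by
      rw [fib]
      have : (Finset.univ.filter fun k' => f k' = f k) = {k} := by
        ext k'; simp [hf.eq_iff]
      rw [this, Finset.card_singleton]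
    rw [this]
    norm_num
  rw [Finset.prod_congr rfl h2, Finset.prod_const,
    Finset.card_image_of_injective _ hf, Finset.card_univ, Fintype.card_fin]

lemma pair_count {s N : ℕ} {k l : Fin s} (hkl : k ≠ l) :
    #(Finset.univ.filter fun f : Fin s → Fin N => f k = f l) ≤ N^(s-1) := by
  have hcard : Fintype.card ({m : Fin s // m ≠ l} → Fin N) = N^(s-1) := by
    rw [Fintype.card_fun, Fintype.card_fin]
    congr 1
    have : Fintype.card {m : Fin s // m ≠ l} = Fintype.card (Fin s) - Fintype.card {m : Fin s // m = l} :=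
      Fintype.card_subtype_compl _
    rw [this, Fintype.card_subtype_eq, Fintype.card_fin]
  calc #(Finset.univ.filter fun f : Fin s → Fin N => f k = f l)
      ≤ #(Finset.univ : Finset ({m : Fin s // m ≠ l} → Fin N)) := by
        refine Finset.card_le_card_of_injOn (fun f => fun m => f m.1)
          (fun _ _ => Finset.mem_univ _) ?_
        intro f hf g hg hfg
        simp only [Finset.coe_filter, Set.mem_setOf_eq, Finset.mem_univ, true_and] at hf hg
        funext m
        by_cases hm : m = l
        · subst hm
          have h1 : f k = g k := congrFun hfg ⟨k, hkl⟩
          rw [← hf, ← hg, h1]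
        · exact congrFun hfg ⟨m, hm⟩
    _ = N^(s-1) := by rw [Finset.card_univ, hcard]

lemma noninj_count (s N : ℕ) :
    #(Finset.univ.filter fun f : Fin s → Fin N => ¬ Function.Injective f) * N ≤ s^2 * N^s := by
  rcases Nat.eq_zero_or_pos s with hs | hs
  · subst hs
    have : (Finset.univ.filter fun f : Fin 0 → Fin N => ¬ Function.Injective f) = ∅ := by
      apply Finset.filter_eq_empty_iff.mpr
      intro f _
      exact fun h => h (Function.injective_of_subsingleton f)
    rw [this]
    simp
  rcases Nat.eq_zero_or_pos N with hN | hN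
  · subst hN; simp
  have hsub : (Finset.univ.filter fun f : Fin s → Fin N => ¬ Function.Injective f)
      ⊆ (Finset.univ.offDiag).biUnion (fun p => Finset.univ.filter fun f => f p.1 = f p.2) := by
    intro f hf
    simp only [Finset.mem_filter, Finset.mem_univ, true_and] at hf
    obtain ⟨x, y, hxy, hne⟩ := Function.not_injective_iff.mp hf
    refine Finset.mem_biUnion.mpr ⟨(x, y), Finset.mem_offDiag.mpr ⟨Finset.mem_univ _, Finset.mem_univ _, hne⟩, ?_⟩
    simp [hxy]
  calc #(Finset.univ.filter fun f : Fin s → Fin N => ¬ Function.Injective f) * N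
      ≤ #((Finset.univ.offDiag).biUnion (fun p => Finset.univ.filter fun f : Fin s → Fin N => f p.1 = f p.2)) * N :=
        Nat.mul_le_mul_right _ (Finset.card_le_card hsub)
    _ ≤ (∑ p ∈ Finset.univ.offDiag, #(Finset.univ.filter fun f : Fin s → Fin N => f p.1 = f p.2)) * N :=
        Nat.mul_le_mul_right _ Finset.card_biUnion_le
    _ ≤ (∑ _p ∈ (Finset.univ : Finset (Fin s)).offDiag, N^(s-1)) * N := by
        refine Nat.mul_le_mul_right _ (Finset.sum_le_sum fun p hp => ?_)
        exact pair_count (Finset.mem_offDiag.mp hp).2.2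
    _ = #(Finset.univ : Finset (Fin s)).offDiag * N^(s-1) * N := by rw [Finset.sum_const, smul_eq_mul]
    _ ≤ s^2 * N^s := by
        rw [Finset.offDiag_card, Finset.card_univ, Fintype.card_fin]
        have h1 : s * s - s ≤ s^2 := by nlinarith [Nat.sub_le (s*s) s]
        have h2 : N^(s-1) * N = N^s := by
          rw [← pow_succ]
          congr 1
          omega
        rw [mul_assoc, h2]
        exact Nat.mul_le_mul_right _ h1

noncomputable def fibP {s N : ℕ} (a : ℝ) (f : Fin s → Fin N) : ℂ :=
  ∏ i : Fin N, (if Even (fib f i) then (1:ℂ) else (a:ℂ))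

lemma moment_est (a : ℝ) {N : ℕ} (hN : 0 < N) (s : ℕ) :
    ‖(∑ j ∈ Finset.range (N+1), (N.choose j : ℂ) * ((1+(a:ℂ))/2)^(N-j) * ((1-(a:ℂ))/2)^j
        * (1 - 2*(j:ℂ)/N)^s) - (a:ℂ)^s‖ ≤ 2 * (max 1 |a|)^s * s^2 / N := by
  set A := max 1 |a| with hA
  have hA1 : (1:ℝ) ≤ A := le_max_left _ _
  have hNC : ((N:ℂ)) ≠ 0 := Nat.cast_ne_zero.mpr hN.ne'
  have hNR : (0:ℝ) < N := Nat.cast_pos.mpr hN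
  -- rewrite sum
  have hterm : ∀ j : ℕ, (1 - 2*(j:ℂ)/N)^s = ((N:ℂ) - 2*j)^s / (N:ℂ)^s := by
    intro j
    rw [← div_pow]
    congr 1
    field_simp
  have hsum : ∑ j ∈ Finset.range (N+1), (N.choose j : ℂ) * ((1+(a:ℂ))/2)^(N-j) * ((1-(a:ℂ))/2)^j
        * (1 - 2*(j:ℂ)/N)^s
      = (∑ f : Fin s → Fin N, fibP a f) / (N:ℂ)^s := by
    simp only [fibP]
    rw [← moment_id a N s, Finset.sum_div]
    exact Finset.sum_congr rfl fun j _ => by rw [hterm j, mul_div_assoc]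
  have hcards : (Finset.univ : Finset (Fin s → Fin N)).card = N^s := by
    rw [Finset.card_univ, Fintype.card_fun, Fintype.card_fin, Fintype.card_fin]
  have has : (a:ℂ)^s = (∑ _f : Fin s → Fin N, (a:ℂ)^s) / (N:ℂ)^s := by
    rw [Finset.sum_const, hcards, nsmul_eq_mul]
    push_cast
    rw [mul_comm, mul_div_assoc, div_self (pow_ne_zero _ hNC), mul_one]
  rw [hsum, has, div_sub_div_same, ← Finset.sum_sub_distrib]
  -- drop injective terms
  have hdrop : ∑ f : Fin s → Fin N, (fibP a f - (a:ℂ)^s)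
      = ∑ f ∈ Finset.univ.filter (fun f : Fin s → Fin N => ¬ Function.Injective f),
          (fibP a f - (a:ℂ)^s) := by
    refine (Finset.sum_subset (Finset.filter_subset _ _) fun f _ hf => ?_).symm
    have hinj : Function.Injective f := by
      by_contra h
      exact hf (Finset.mem_filter.mpr ⟨Finset.mem_univ _, h⟩)
    rw [show fibP a f = (a:ℂ)^s by simpa [fibP] using prod_fib_inj a f hinj, sub_self]
  rw [hdrop, norm_div, norm_pow, Complex.norm_natCast]
  have hbound : ‖∑ f ∈ Finset.univ.filter (fun f : Fin s → Fin N => ¬ Function.Injective f),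
      (fibP a f - (a:ℂ)^s)‖
      ≤ (#(Finset.univ.filter fun f : Fin s → Fin N => ¬ Function.Injective f) : ℝ) * (2 * A^s) := by
    refine (norm_sum_le _ _).trans ?_
    rw [← nsmul_eq_mul]
    refine Finset.sum_le_card_nsmul _ _ _ fun f _ => ?_
    refine (norm_sub_le _ _).trans ?_
    have h1 : ‖fibP a f‖ ≤ A^s := (by simpa [fibP] using prod_fib_bound a f)
    have h2 : ‖(a:ℂ)^s‖ ≤ A^s := by
      rw [norm_pow, Complex.norm_real, Real.norm_eq_abs]
      exact pow_le_pow_left₀ (abs_nonneg a) (le_max_right 1 |a|) s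
    linarith
  have hApos : (0:ℝ) < A^s := pow_pos (lt_of_lt_of_le one_pos hA1) s
  have hcount : (#(Finset.univ.filter fun f : Fin s → Fin N => ¬ Function.Injective f) : ℝ) * N
      ≤ (s:ℝ)^2 * (N:ℝ)^s := by exact_mod_cast noninj_count s N
  calc ‖∑ f ∈ Finset.univ.filter (fun f : Fin s → Fin N => ¬ Function.Injective f),
        (fibP a f - (a:ℂ)^s)‖ / (N:ℝ)^s
      ≤ ((#(Finset.univ.filter fun f : Fin s → Fin N => ¬ Function.Injective f) : ℝ) * (2 * A^s))
          / (N:ℝ)^s := by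
        gcongr
    _ ≤ 2 * A^s * (s:ℝ)^2 / N := by
        rw [div_le_div_iff₀ (by positivity) hNR]
        nlinarith [hcount, hApos, hNR]

noncomputable def cf (a : ℝ) (N j : ℕ) : ℂ :=
  (N.choose j : ℂ) * ((1+(a:ℂ))/2)^(N-j) * ((1-(a:ℂ))/2)^j

noncomputable def Zfun {n : ℕ} (b : Fin n → ℂ) (ξ : ℂ) : ℂ :=
  Complex.I * ∑ r : Fin n, b r * ξ^(r:ℕ)

lemma moment_est' (a : ℝ) {N : ℕ} (hN : 0 < N) (s : ℕ) :
    ‖(∑ j ∈ Finset.range (N+1), cf a N j * (1 - 2*(j:ℂ)/N)^s) - (a:ℂ)^s‖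
      ≤ 2 * (max 1 |a|)^s * s^2 / N := by
  simpa only [cf] using moment_est a hN s

lemma Zpow_expand {n : ℕ} (b : Fin n → ℂ) (ξ : ℂ) (m : ℕ) :
    (Zfun b ξ)^m = ∑ g : Fin m → Fin n,
      (Complex.I^m * ∏ k : Fin m, b (g k)) * ξ^(∑ k : Fin m, (g k : ℕ)) := by
  rw [Zfun, mul_pow, Finset.sum_pow', Fintype.piFinset_univ, Finset.mul_sum]
  refine Finset.sum_congr rfl fun g _ => ?_
  rw [Finset.prod_mul_distrib, Finset.prod_pow_eq_pow_sum]
  ring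

lemma Em_est (a : ℝ) {N : ℕ} (hN : 0 < N) {n : ℕ} (b : Fin n → ℂ) (m : ℕ) :
    ‖(∑ j ∈ Finset.range (N+1), cf a N j * (Zfun b (1 - 2*(j:ℂ)/N))^m) - (Zfun b (a:ℂ))^m‖
      ≤ (∑ r : Fin n, ‖b r‖)^m * (2 * (max 1 |a|)^((n-1)*m) * (((n-1)*m : ℕ) : ℝ)^2 / N) := by
  set A := max 1 |a| with hA
  have hA1 : (1:ℝ) ≤ A := le_max_left _ _
  have key : (∑ j ∈ Finset.range (N+1), cf a N j * (Zfun b (1 - 2*(j:ℂ)/N))^m) - (Zfun b (a:ℂ))^m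
      = ∑ g : Fin m → Fin n, (Complex.I^m * ∏ k : Fin m, b (g k)) *
          ((∑ j ∈ Finset.range (N+1), cf a N j * (1 - 2*(j:ℂ)/N)^(∑ k : Fin m, (g k : ℕ)))
            - (a:ℂ)^(∑ k : Fin m, (g k : ℕ))) := by
    have h1 : ∑ j ∈ Finset.range (N+1), cf a N j * (Zfun b (1 - 2*(j:ℂ)/N))^m
        = ∑ g : Fin m → Fin n, (Complex.I^m * ∏ k : Fin m, b (g k)) *
            (∑ j ∈ Finset.range (N+1), cf a N j * (1 - 2*(j:ℂ)/N)^(∑ k : Fin m, (g k : ℕ))) := by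
      calc ∑ j ∈ Finset.range (N+1), cf a N j * (Zfun b (1 - 2*(j:ℂ)/N))^m
          = ∑ j ∈ Finset.range (N+1), ∑ g : Fin m → Fin n,
              (Complex.I^m * ∏ k : Fin m, b (g k)) *
                (cf a N j * (1 - 2*(j:ℂ)/N)^(∑ k : Fin m, (g k : ℕ))) := by
            refine Finset.sum_congr rfl fun j _ => ?_
            rw [Zpow_expand, Finset.mul_sum]
            exact Finset.sum_congr rfl fun g _ => by ring
        _ = ∑ g : Fin m → Fin n, ∑ j ∈ Finset.range (N+1),
              (Complex.I^m * ∏ k : Fin m, b (g k)) *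
                (cf a N j * (1 - 2*(j:ℂ)/N)^(∑ k : Fin m, (g k : ℕ))) := Finset.sum_comm
        _ = ∑ g : Fin m → Fin n, (Complex.I^m * ∏ k : Fin m, b (g k)) *
              (∑ j ∈ Finset.range (N+1), cf a N j * (1 - 2*(j:ℂ)/N)^(∑ k : Fin m, (g k : ℕ))) := by
            exact Finset.sum_congr rfl fun g _ => (Finset.mul_sum _ _ _).symm
    rw [h1, Zpow_expand, ← Finset.sum_sub_distrib]
    exact Finset.sum_congr rfl fun g _ => by ring
  rw [key]
  refine (norm_sum_le _ _).trans ?_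
  have hterm : ∀ g : Fin m → Fin n,
      ‖(Complex.I^m * ∏ k : Fin m, b (g k)) *
          ((∑ j ∈ Finset.range (N+1), cf a N j * (1 - 2*(j:ℂ)/N)^(∑ k : Fin m, (g k : ℕ)))
            - (a:ℂ)^(∑ k : Fin m, (g k : ℕ)))‖
        ≤ (∏ k : Fin m, ‖b (g k)‖) * (2 * A^((n-1)*m) * (((n-1)*m : ℕ) : ℝ)^2 / N) := by
    intro g
    rw [norm_mul, norm_mul, norm_pow, Complex.norm_I, one_pow, one_mul, ← norm_prod]
    refine mul_le_mul_of_nonneg_left ?_ (norm_nonneg _)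
    set s := ∑ k : Fin m, (g k : ℕ) with hs
    have hsle : s ≤ (n-1)*m := by
      rw [hs]
      calc ∑ k : Fin m, (g k : ℕ) ≤ ∑ _k : Fin m, (n-1) := by
            refine Finset.sum_le_sum fun k _ => ?_
            have := (g k).2
            omega
        _ = (n-1)*m := by rw [Finset.sum_const, smul_eq_mul, Finset.card_univ, Fintype.card_fin]; ring
    refine (moment_est' a hN s).trans ?_
    have h1 : A^s ≤ A^((n-1)*m) := pow_le_pow_right₀ hA1 hsle
    have h2 : ((s:ℝ))^2 ≤ (((n-1)*m : ℕ) : ℝ)^2 := by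
      have : (s:ℝ) ≤ (((n-1)*m : ℕ) : ℝ) := by exact_mod_cast hsle
      exact pow_le_pow_left₀ (by positivity) this 2
    have hApos : (0:ℝ) ≤ A^s := by positivity
    gcongr
  refine (Finset.sum_le_sum fun g _ => hterm g).trans ?_
  rw [← Finset.sum_mul]
  refine mul_le_mul_of_nonneg_right ?_ (by positivity)
  rw [Finset.sum_pow', Fintype.piFinset_univ]

-- exp as tsum

lemma cexp_tsum (z : ℂ) : Complex.exp z = ∑' m : ℕ, z^m / (m.factorial : ℂ) := by
  rw [Complex.exp_eq_exp_ℂ, NormedSpace.exp_eq_tsum_div]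

lemma csummable (z : ℂ) : Summable (fun m : ℕ => z^m / (m.factorial : ℂ)) := by
  refine Summable.of_norm ?_
  have := Real.summable_pow_div_factorial ‖z‖
  refine this.congr fun m => ?_
  rw [norm_div, norm_pow, Complex.norm_natCast]

theorem psiN_tendsto_uniformly (P : Polynomial ℂ) (a : ℝ)
    (K : Set (ℝ × ℝ)) (hK : IsCompact K) :
    TendstoUniformlyOn
      (fun (N : ℕ) (q : ℝ × ℝ) =>
        ∑ j ∈ Finset.range (N + 1),
          (N.choose j : ℂ) * ((1 + (a : ℂ)) / 2) ^ (N - j) * ((1 - (a : ℂ)) / 2) ^ j *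
            Complex.exp (Complex.I * P.eval (1 - 2 * (j : ℂ) / N) * q.1) *
            Complex.exp (Complex.I * (1 - 2 * (j : ℂ) / N) * q.2))
      (fun q : ℝ × ℝ =>
        Complex.exp (Complex.I * P.eval (a : ℂ) * q.1) *
          Complex.exp (Complex.I * (a : ℂ) * q.2))
      Filter.atTop K := by
  classical
  set D : ℕ := P.natDegree + 1 with hD
  set n : ℕ := D + 1 with hn
  obtain ⟨ρ, hρ⟩ := hK.isBounded.subset_closedBall 0
  set MK : ℝ := max ρ 0 with hMK
  have hqbound : ∀ q ∈ K, ‖q.1‖ ≤ MK ∧ ‖q.2‖ ≤ MK := by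
    intro q hq
    have : ‖q‖ ≤ ρ := by
      have := hρ hq
      rwa [Metric.mem_closedBall, dist_zero_right] at this
    exact ⟨(norm_fst_le q).trans (this.trans (le_max_left _ _)),
      (norm_snd_le q).trans (this.trans (le_max_left _ _))⟩
  set bq : (ℝ × ℝ) → Fin n → ℂ := fun q r =>
    (q.1 : ℂ) * P.coeff r + (if (r : ℕ) = 1 then (q.2 : ℂ) else 0) with hbq
  -- the exponent identity
  have hZ : ∀ (q : ℝ × ℝ) (ξ : ℂ),
      Complex.I * P.eval ξ * q.1 + Complex.I * ξ * q.2 = Zfun (bq q) ξ := by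
    intro q ξ
    rw [Zfun]
    have h1 : ∑ r : Fin n, bq q r * ξ^(r:ℕ)
        = (q.1:ℂ) * (∑ r : Fin n, P.coeff r * ξ^(r:ℕ))
          + ∑ r : Fin n, (if (r:ℕ) = 1 then (q.2:ℂ) else 0) * ξ^(r:ℕ) := by
      rw [Finset.mul_sum, ← Finset.sum_add_distrib]
      exact Finset.sum_congr rfl fun r _ => by rw [hbq]; ring
    have h2 : ∑ r : Fin n, P.coeff r * ξ^(r:ℕ) = P.eval ξ := by
      rw [Fin.sum_univ_eq_sum_range (fun r => P.coeff r * ξ^r)]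
      exact (Polynomial.eval_eq_sum_range' (by omega) ξ).symm
    have h3 : ∑ r : Fin n, (if (r:ℕ) = 1 then (q.2:ℂ) else 0) * ξ^(r:ℕ) = (q.2:ℂ) * ξ := by
      rw [Fin.sum_univ_eq_sum_range (fun r => (if r = 1 then (q.2:ℂ) else 0) * ξ^r)]
      have : ∀ r ∈ Finset.range n, (if r = 1 then (q.2:ℂ) else 0) * ξ^r
          = if r = 1 then (q.2:ℂ) * ξ^r else 0 := by
        intro r _; split_ifs <;> simp
      rw [Finset.sum_congr rfl this, Finset.sum_ite_eq' (Finset.range n) 1 (fun r => (q.2:ℂ) * ξ^r),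
        if_pos (Finset.mem_range.mpr (by omega))]
      rw [pow_one]
    rw [h1, h2, h3]
    ring
  -- coefficient norm bound
  set SP : ℝ := ∑ r : Fin n, ‖P.coeff (r:ℕ)‖ with hSP
  set B1 : ℝ := MK * SP + n * MK with hB1
  have hMK0 : (0:ℝ) ≤ MK := le_max_right _ _
  have hSP0 : (0:ℝ) ≤ SP := Finset.sum_nonneg fun _ _ => norm_nonneg _
  have hB10 : (0:ℝ) ≤ B1 := by positivity
  have hSb : ∀ q ∈ K, ∑ r : Fin n, ‖bq q r‖ ≤ B1 := by
    intro q hq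
    obtain ⟨h1, h2⟩ := hqbound q hq
    calc ∑ r : Fin n, ‖bq q r‖ ≤ ∑ r : Fin n, (MK * ‖P.coeff (r:ℕ)‖ + MK) := by
          refine Finset.sum_le_sum fun r _ => ?_
          simp only [hbq]
          refine (norm_add_le _ _).trans ?_
          have e1 : ‖(q.1:ℂ) * P.coeff (r:ℕ)‖ ≤ MK * ‖P.coeff (r:ℕ)‖ := by
            rw [norm_mul, Complex.norm_real, Real.norm_eq_abs, ← Real.norm_eq_abs]
            exact mul_le_mul_of_nonneg_right h1 (norm_nonneg _)
          have e2 : ‖(if (r:ℕ) = 1 then ((q.2:ℝ):ℂ) else 0)‖ ≤ MK := by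
            split_ifs
            · rw [Complex.norm_real]; exact h2
            · rw [norm_zero]; exact hMK0
          linarith
      _ = B1 := by
          rw [Finset.sum_add_distrib, ← Finset.mul_sum, Finset.sum_const, Finset.card_univ,
            Fintype.card_fin, hB1, nsmul_eq_mul, ← hSP]
  set A : ℝ := max 1 |a| with hA
  have hA1 : (1:ℝ) ≤ A := le_max_left _ _
  set B : ℝ := B1 * A^D with hB
  have hB0 : (0:ℝ) ≤ B := by positivity
  set B' : ℝ := max B 1 with hB'
  have hB'1 : (1:ℝ) ≤ B' := le_max_right _ _
  have hBB' : B ≤ B' := le_max_left _ _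
  set Sexp : ℝ := ∑' m : ℕ, (4*B')^m / (m.factorial : ℝ) with hSexp
  have hsumbd : Summable (fun m : ℕ => (4*B')^m / (m.factorial : ℝ)) :=
    Real.summable_pow_div_factorial _
  have hSexp0 : (0:ℝ) ≤ Sexp := tsum_nonneg fun m => by positivity
  set C : ℝ := 2 * (D:ℝ)^2 * Sexp with hC
  have hC0 : (0:ℝ) ≤ C := by positivity
  -- master bound
  have key : ∀ (N : ℕ), 0 < N → ∀ q ∈ K,
      ‖(∑ j ∈ Finset.range (N + 1),
          (N.choose j : ℂ) * ((1 + (a : ℂ)) / 2) ^ (N - j) * ((1 - (a : ℂ)) / 2) ^ j *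
            Complex.exp (Complex.I * P.eval (1 - 2 * (j : ℂ) / N) * q.1) *
            Complex.exp (Complex.I * (1 - 2 * (j : ℂ) / N) * q.2))
        - Complex.exp (Complex.I * P.eval (a : ℂ) * q.1) *
            Complex.exp (Complex.I * (a : ℂ) * q.2)‖ ≤ C / N := by
    intro N hN q hq
    have hNR : (0:ℝ) < N := Nat.cast_pos.mpr hN
    have hψ : ∑ j ∈ Finset.range (N + 1),
          (N.choose j : ℂ) * ((1 + (a : ℂ)) / 2) ^ (N - j) * ((1 - (a : ℂ)) / 2) ^ j *
            Complex.exp (Complex.I * P.eval (1 - 2 * (j : ℂ) / N) * q.1) *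
            Complex.exp (Complex.I * (1 - 2 * (j : ℂ) / N) * q.2)
        = ∑ j ∈ Finset.range (N + 1), cf a N j * Complex.exp (Zfun (bq q) (1 - 2*(j:ℂ)/N)) := by
      refine Finset.sum_congr rfl fun j _ => ?_
      have he : Complex.exp (Complex.I * P.eval (1 - 2 * (j : ℂ) / N) * q.1) *
            Complex.exp (Complex.I * (1 - 2 * (j : ℂ) / N) * q.2)
          = Complex.exp (Zfun (bq q) (1 - 2*(j:ℂ)/N)) := by
        rw [← Complex.exp_add, hZ q (1 - 2*(j:ℂ)/N)]
      rw [cf, ← he]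
      ring
    have htgt : Complex.exp (Complex.I * P.eval (a : ℂ) * q.1) *
          Complex.exp (Complex.I * (a : ℂ) * q.2)
        = Complex.exp (Zfun (bq q) (a:ℂ)) := by
      rw [← Complex.exp_add, hZ q (a:ℂ)]
    rw [hψ, htgt]
    -- tsum expansion
    have hg1sum : ∀ j : ℕ, Summable (fun m : ℕ =>
        cf a N j * ((Zfun (bq q) (1 - 2*(j:ℂ)/N))^m / (m.factorial : ℂ))) :=
      fun j => (csummable _).mul_left _
    have hg1 : Summable (fun m : ℕ => ∑ j ∈ Finset.range (N+1),
        cf a N j * ((Zfun (bq q) (1 - 2*(j:ℂ)/N))^m / (m.factorial : ℂ))) :=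
      summable_sum fun j _ => hg1sum j
    have hψ2 : ∑ j ∈ Finset.range (N + 1), cf a N j * Complex.exp (Zfun (bq q) (1 - 2*(j:ℂ)/N))
        = ∑' m : ℕ, ∑ j ∈ Finset.range (N+1),
            cf a N j * ((Zfun (bq q) (1 - 2*(j:ℂ)/N))^m / (m.factorial : ℂ)) := by
      rw [Summable.tsum_finsetSum fun j _ => hg1sum j]
      refine Finset.sum_congr rfl fun j _ => ?_
      rw [tsum_mul_left, ← cexp_tsum]
    have htgt2 : Complex.exp (Zfun (bq q) (a:ℂ))
        = ∑' m : ℕ, (Zfun (bq q) (a:ℂ))^m / (m.factorial : ℂ) := cexp_tsum _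
    rw [hψ2, htgt2, ← Summable.tsum_sub hg1 (csummable _)]
    -- identify terms
    have hterm : ∀ m : ℕ, (∑ j ∈ Finset.range (N+1),
          cf a N j * ((Zfun (bq q) (1 - 2*(j:ℂ)/N))^m / (m.factorial : ℂ)))
            - (Zfun (bq q) (a:ℂ))^m / (m.factorial : ℂ)
        = ((∑ j ∈ Finset.range (N+1), cf a N j * (Zfun (bq q) (1 - 2*(j:ℂ)/N))^m)
            - (Zfun (bq q) (a:ℂ))^m) / (m.factorial : ℂ) := by
      intro m
      rw [sub_div, Finset.sum_div]
      congr 1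
      exact Finset.sum_congr rfl fun j _ => by ring
    have hbd : ∀ m : ℕ, ‖(∑ j ∈ Finset.range (N+1),
          cf a N j * ((Zfun (bq q) (1 - 2*(j:ℂ)/N))^m / (m.factorial : ℂ)))
            - (Zfun (bq q) (a:ℂ))^m / (m.factorial : ℂ)‖
        ≤ (2 * (D:ℝ)^2 / N) * ((4*B')^m / (m.factorial : ℝ)) := by
      intro m
      rw [hterm m, norm_div, Complex.norm_natCast]
      have hE := Em_est a hN (bq q) m
      have hn1 : n - 1 = D := by omega
      rw [hn1] at hE
      have hstep1 : (∑ r : Fin n, ‖bq q r‖)^m * (2 * A^(D*m) * (((D*m : ℕ)) : ℝ)^2 / N)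
          ≤ (2 * (D:ℝ)^2 * ((m:ℝ)^2 * B^m)) / N := by
        have e1 : (∑ r : Fin n, ‖bq q r‖)^m ≤ B1^m :=
          pow_le_pow_left₀ (Finset.sum_nonneg fun _ _ => norm_nonneg _) (hSb q hq) m
        have e2 : B1^m * (2 * A^(D*m) * (((D*m : ℕ)) : ℝ)^2 / N)
            = (2 * (D:ℝ)^2 * ((m:ℝ)^2 * B^m)) / N := by
          rw [hB, mul_pow, pow_mul]
          push_cast
          ring
        rw [← e2]
        have hX0 : (0:ℝ) ≤ 2 * A^(D*m) * (((D*m : ℕ)) : ℝ)^2 / N := by positivity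
        exact mul_le_mul_of_nonneg_right e1 hX0
      have hstep2 : (2 * (D:ℝ)^2 * ((m:ℝ)^2 * B^m)) / N / (m.factorial : ℝ)
          ≤ (2 * (D:ℝ)^2 / N) * ((4*B')^m / (m.factorial : ℝ)) := by
        have hm2 : ((m:ℝ))^2 * B^m ≤ (4*B')^m := by
          have hm4 : ((m:ℝ))^2 ≤ 4^m := by
            have : (m:ℝ) ≤ 2^m := by exact_mod_cast (Nat.lt_two_pow_self (n := m)).le
            calc ((m:ℝ))^2 ≤ (2^m)^2 := pow_le_pow_left₀ (Nat.cast_nonneg m) this 2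
              _ = 4^m := by rw [← pow_mul, mul_comm, pow_mul]; norm_num
          calc ((m:ℝ))^2 * B^m ≤ 4^m * B'^m := by
                refine mul_le_mul hm4 (pow_le_pow_left₀ hB0 hBB' m) (by positivity) (by positivity)
            _ = (4*B')^m := (mul_pow 4 B' m).symm
        rw [div_div, div_mul_div_comm]
        gcongr
      calc ‖(∑ j ∈ Finset.range (N+1), cf a N j * (Zfun (bq q) (1 - 2*(j:ℂ)/N))^m)
            - (Zfun (bq q) (a:ℂ))^m‖ / (m.factorial : ℝ)
          ≤ ((∑ r : Fin n, ‖bq q r‖)^m * (2 * A^(D*m) * (((D*m : ℕ)) : ℝ)^2 / N)) / (m.factorial : ℝ) := by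
            gcongr
        _ ≤ (2 * (D:ℝ)^2 * ((m:ℝ)^2 * B^m)) / N / (m.factorial : ℝ) := by
            gcongr
        _ ≤ (2 * (D:ℝ)^2 / N) * ((4*B')^m / (m.factorial : ℝ)) := hstep2
    have hFnorm : Summable (fun m : ℕ => ‖(∑ j ∈ Finset.range (N+1),
          cf a N j * ((Zfun (bq q) (1 - 2*(j:ℂ)/N))^m / (m.factorial : ℂ)))
            - (Zfun (bq q) (a:ℂ))^m / (m.factorial : ℂ)‖) := by
      refine Summable.of_nonneg_of_le (fun m => norm_nonneg _) hbd (hsumbd.mul_left _)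
    calc ‖∑' m : ℕ, ((∑ j ∈ Finset.range (N+1),
          cf a N j * ((Zfun (bq q) (1 - 2*(j:ℂ)/N))^m / (m.factorial : ℂ)))
            - (Zfun (bq q) (a:ℂ))^m / (m.factorial : ℂ))‖
        ≤ ∑' m : ℕ, ‖(∑ j ∈ Finset.range (N+1),
            cf a N j * ((Zfun (bq q) (1 - 2*(j:ℂ)/N))^m / (m.factorial : ℂ)))
              - (Zfun (bq q) (a:ℂ))^m / (m.factorial : ℂ)‖ := norm_tsum_le_tsum_norm hFnorm
      _ ≤ ∑' m : ℕ, (2 * (D:ℝ)^2 / N) * ((4*B')^m / (m.factorial : ℝ)) :=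
          Summable.tsum_le_tsum hbd hFnorm (hsumbd.mul_left _)
      _ = C / N := by
          rw [tsum_mul_left, ← hSexp, hC]
          ring
  -- conclude
  rw [Metric.tendstoUniformlyOn_iff]
  intro ε hε
  obtain ⟨N₀, hN₀⟩ := exists_nat_gt (C / ε)
  rw [Filter.eventually_atTop]
  refine ⟨max N₀ 1, fun N hNge q hq => ?_⟩
  have hN1 : 1 ≤ N := le_trans (le_max_right _ _) hNge
  have hNN₀ : N₀ ≤ N := le_trans (le_max_left _ _) hNge
  have hNpos : (0:ℝ) < N := by exact_mod_cast hN1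
  rw [dist_eq_norm, norm_sub_rev]
  refine lt_of_le_of_lt (key N hN1 q hq) ?_
  rw [div_lt_iff₀ hNpos]
  have : C / ε < N := lt_of_lt_of_le hN₀ (by exact_mod_cast hNN₀)
  rw [div_lt_iff₀ hε] at this
  linarith
end

section
/- Let a ∈ ℝ, λ ∈ ℝ, and for each N ≥ 1 let F_N(x,a) = Σ_{j=0}^N C_j(N,a)·exp(i(1−2j/N)x) with C_j(N,a) = binom(N,j)((1+a)/2)^{N−j}((1−a)/2)^j. Then for every k ∈ ℕ, the k-th derivative d^k/dx^k F_N(x,a) converges to (ia)^k·exp(iax) uniformly on every compact subset of ℝ as N → ∞. -/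
open Complex Filter Set

namespace Complex

noncomputable def abs : AbsoluteValue ℂ ℝ := NormedField.toAbsoluteValue ℂ

@[simp] lemma abs_apply (z : ℂ) : Complex.abs z = ‖z‖ := rfl

lemma abs_I : Complex.abs I = 1 := by simp
lemma abs_two : Complex.abs 2 = 2 := by simp
lemma abs_natCast (n : ℕ) : Complex.abs n = n := by simp
lemma abs_ofReal (r : ℝ) : Complex.abs r = |r| := by simp
lemma abs_exp (z : ℂ) : Complex.abs (exp z) = Real.exp z.re := by simp [Complex.norm_exp]
lemma re_le_abs (z : ℂ) : z.re ≤ Complex.abs z := Complex.re_le_norm z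
lemma abs_exp_sub_one_sub_id_le {x : ℂ} (hx : Complex.abs x ≤ 1) :
    Complex.abs (exp x - 1 - x) ≤ Complex.abs x ^ 2 := Complex.norm_exp_sub_one_sub_id_le hx

end Complex

namespace FNproof

noncomputable def Gs (a : ℝ) (N : ℕ) (z : ℂ) : ℂ :=
  ∑ j ∈ Finset.range (N + 1),
    (N.choose j : ℂ) * ((1 + (a : ℂ)) / 2) ^ (N - j) * ((1 - (a : ℂ)) / 2) ^ j *
      Complex.exp (Complex.I * (1 - 2 * (j : ℂ) / N) * z)

lemma Gs_diff (a : ℝ) (N : ℕ) : Differentiable ℂ (Gs a N) := by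
  unfold Gs
  apply Differentiable.fun_sum
  intro j hj
  exact ((differentiable_id.const_mul _).cexp).const_mul _

lemma entire_iteratedDeriv {f : ℂ → ℂ} (hf : Differentiable ℂ f) (k : ℕ) :
    Differentiable ℂ (iteratedDeriv k f) := by
  induction k with
  | zero => simpa [iteratedDeriv_zero]
  | succ n ih =>
      rw [iteratedDeriv_succ, ← analyticOnNhd_univ_iff_differentiable]
      rw [← analyticOnNhd_univ_iff_differentiable] at ih
      exact ih.deriv

lemma Gs_eq_pow (a : ℝ) {N : ℕ} (hN : N ≠ 0) (z : ℂ) :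
    Gs a N z =
      ((1 - (a : ℂ)) / 2 * Complex.exp (-(Complex.I * z / N)) +
        (1 + (a : ℂ)) / 2 * Complex.exp (Complex.I * z / N)) ^ N := by
  rw [Gs, add_pow]
  apply Finset.sum_congr rfl
  intro j hj
  have hjN : j ≤ N := Finset.mem_range_succ_iff.mp hj
  have hNne : (N : ℂ) ≠ 0 := Nat.cast_ne_zero.mpr hN
  rw [mul_pow, mul_pow, ← Complex.exp_nat_mul, ← Complex.exp_nat_mul]
  have harg : Complex.I * (1 - 2 * (j : ℂ) / N) * z =
      (j : ℂ) * -(Complex.I * z / N) + ((N - j : ℕ) : ℂ) * (Complex.I * z / N) := by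
    push_cast [Nat.cast_sub hjN]
    field_simp
    ring
  rw [harg, Complex.exp_add]
  ring


set_option maxHeartbeats 2000000 in
lemma main_est (a R : ℝ) (hR : 0 ≤ R) :
    ∃ D : ℝ, ∀ N : ℕ, 1 ≤ N → (1 + |a|) * R ≤ N → ∀ z : ℂ, Complex.abs z ≤ R →
      Complex.abs
        (((1 - (a : ℂ)) / 2 * Complex.exp (-(Complex.I * z / N)) +
            (1 + (a : ℂ)) / 2 * Complex.exp (Complex.I * z / N)) ^ N -
          Complex.exp (Complex.I * a * z)) ≤ D / N := by
  set C : ℝ := 1 + |a| + a ^ 2 with hC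
  have hC0 : 0 < C := by positivity
  refine ⟨Real.exp (|a| * R + C * R ^ 2) * C * R ^ 2, ?_⟩
  intro N hN1 hNR z hz
  have hNpos : (0 : ℝ) < N := by exact_mod_cast hN1
  have hNne : (N : ℂ) ≠ 0 := by exact_mod_cast hNpos.ne'
  set u : ℂ := Complex.I * z / N with hu
  set v : ℂ := Complex.I * a * z / N with hv
  have hvau : v = (a : ℂ) * u := by rw [hu, hv]; ring
  set A : ℂ := (1 - (a : ℂ)) / 2 * Complex.exp (-u) + (1 + (a : ℂ)) / 2 * Complex.exp u with hA
  set B : ℂ := Complex.exp v with hB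
  have habs_u : Complex.abs u ≤ R / N := by
    rw [hu, map_div₀, map_mul]
    simp only [Complex.abs_I, one_mul, Complex.abs_natCast]
    gcongr
  have habs_v : Complex.abs v ≤ |a| * (R / N) := by
    rw [hvau, map_mul, Complex.abs_ofReal]
    gcongr
  have hRN1 : (1 + |a|) * (R / N) ≤ 1 := by
    rw [mul_div_assoc', div_le_one hNpos]
    exact hNR
  have hRN0 : 0 ≤ R / N := by positivity
  have hu1 : Complex.abs u ≤ 1 := habs_u.trans (by nlinarith [abs_nonneg a])
  have hv1 : Complex.abs v ≤ 1 := habs_v.trans (by nlinarith [abs_nonneg a])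
  have hdiff : A - B = (1 - (a : ℂ)) / 2 * (Complex.exp (-u) - 1 - (-u)) +
      (1 + (a : ℂ)) / 2 * (Complex.exp u - 1 - u) - (Complex.exp v - 1 - v) := by
    rw [hA, hB, hvau]; ring
  have hcoef1 : Complex.abs ((1 - (a : ℂ)) / 2) ≤ (1 + |a|) / 2 := by
    rw [map_div₀, Complex.abs_two]
    gcongr
    have := Complex.abs.add_le 1 (-(a:ℂ))
    simpa [sub_eq_add_neg] using this
  have hcoef2 : Complex.abs ((1 + (a : ℂ)) / 2) ≤ (1 + |a|) / 2 := by
    rw [map_div₀, Complex.abs_two]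
    gcongr
    have := Complex.abs.add_le 1 ((a:ℂ))
    simpa using this
  have hAB : Complex.abs (A - B) ≤ C * (R / N) ^ 2 := by
    rw [hdiff]
    have h1 := Complex.abs_exp_sub_one_sub_id_le (x := -u) (by simpa using hu1)
    have h2 := Complex.abs_exp_sub_one_sub_id_le hu1
    have h3 := Complex.abs_exp_sub_one_sub_id_le hv1
    rw [map_neg_eq_map] at h1
    have hvsq : Complex.abs v ^ 2 ≤ a ^ 2 * (R / N) ^ 2 := by
      have := habs_v
      nlinarith [Complex.abs.nonneg v, abs_nonneg a, _root_.sq_abs a]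
    have husq : Complex.abs u ^ 2 ≤ (R / N) ^ 2 := by
      nlinarith [Complex.abs.nonneg u]
    calc Complex.abs ((1 - (a : ℂ)) / 2 * (Complex.exp (-u) - 1 - (-u)) +
          (1 + (a : ℂ)) / 2 * (Complex.exp u - 1 - u) - (Complex.exp v - 1 - v))
        ≤ Complex.abs ((1 - (a : ℂ)) / 2) * Complex.abs (Complex.exp (-u) - 1 - (-u)) +
          Complex.abs ((1 + (a : ℂ)) / 2) * Complex.abs (Complex.exp u - 1 - u) +
          Complex.abs (Complex.exp v - 1 - v) := by
          refine (Complex.abs.sub_le_add _ _).trans ?_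
          gcongr
          exact (Complex.abs.add_le _ _).trans (by rw [map_mul, map_mul])
      _ ≤ (1 + |a|) / 2 * ((R / N) ^ 2) + (1 + |a|) / 2 * ((R / N) ^ 2) + a ^ 2 * (R / N) ^ 2 := by
          have t1 := mul_le_mul hcoef1 (h1.trans husq) (Complex.abs.nonneg _) (by positivity)
          have t2 := mul_le_mul hcoef2 (h2.trans husq) (Complex.abs.nonneg _) (by positivity)
          have t3 := h3.trans hvsq
          linarith
      _ = C * (R / N) ^ 2 := by rw [hC]; ring
  set m : ℝ := Real.exp (|a| * (R / N) + C * (R / N) ^ 2) with hm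
  have hm1 : (1 : ℝ) ≤ m := Real.one_le_exp (by positivity)
  have hBabs : Complex.abs B ≤ Real.exp (|a| * (R / N)) := by
    rw [hB, Complex.abs_exp]
    exact Real.exp_le_exp.mpr ((Complex.re_le_abs v).trans habs_v)
  have hexpkey : Real.exp (|a| * (R / N)) + C * (R / N) ^ 2 ≤ m := by
    rw [hm, Real.exp_add]
    have h1 : (1 : ℝ) ≤ Real.exp (|a| * (R / N)) := Real.one_le_exp (by positivity)
    have h2 : 1 + C * (R / N) ^ 2 ≤ Real.exp (C * (R / N) ^ 2) := by
      linarith [Real.add_one_le_exp (C * (R / N) ^ 2)]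
    have ht0 : (0:ℝ) ≤ C * (R / N) ^ 2 := by positivity
    have h3 : C * (R / N) ^ 2 ≤ Real.exp (|a| * (R / N)) * (C * (R / N) ^ 2) :=
      le_mul_of_one_le_left ht0 h1
    calc Real.exp (|a| * (R / N)) + C * (R / N) ^ 2
        ≤ Real.exp (|a| * (R / N)) * (1 + C * (R / N) ^ 2) := by
          have : Real.exp (|a| * (R / N)) * (1 + C * (R / N) ^ 2) =
            Real.exp (|a| * (R / N)) + Real.exp (|a| * (R / N)) * (C * (R / N) ^ 2) := by ring
          linarith
      _ ≤ Real.exp (|a| * (R / N)) * Real.exp (C * (R / N) ^ 2) :=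
          mul_le_mul_of_nonneg_left h2 (Real.exp_pos _).le
  have hBm : Complex.abs B ≤ m := by
    have ht0' : (0:ℝ) ≤ C * (R / N) ^ 2 := by positivity
    linarith [hBabs, hexpkey]
  have hAm : Complex.abs A ≤ m := by
    calc Complex.abs A = Complex.abs (B + (A - B)) := by ring_nf
      _ ≤ Complex.abs B + Complex.abs (A - B) := Complex.abs.add_le _ _
      _ ≤ Real.exp (|a| * (R / N)) + C * (R / N) ^ 2 := add_le_add hBabs hAB
      _ ≤ m := hexpkey
  have hgeom : (∑ i ∈ Finset.range N, A ^ i * B ^ (N - 1 - i)) * (A - B) = A ^ N - B ^ N :=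
    geom_sum₂_mul A B N
  have hBpow : B ^ N = Complex.exp (Complex.I * a * z) := by
    rw [hB, ← Complex.exp_nat_mul, hv]
    congr 1
    field_simp
  have hsum : Complex.abs (∑ i ∈ Finset.range N, A ^ i * B ^ (N - 1 - i)) ≤ N * m ^ (N - 1) := by
    calc Complex.abs (∑ i ∈ Finset.range N, A ^ i * B ^ (N - 1 - i))
        ≤ ∑ i ∈ Finset.range N, Complex.abs (A ^ i * B ^ (N - 1 - i)) :=
          Complex.abs.sum_le _ _
      _ ≤ ∑ _i ∈ Finset.range N, m ^ (N - 1) := by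
          apply Finset.sum_le_sum
          intro i hi
          have hiN : i ≤ N - 1 := Nat.le_sub_one_of_lt (Finset.mem_range.mp hi)
          have : i + (N - 1 - i) = N - 1 := by omega
          calc Complex.abs (A ^ i * B ^ (N - 1 - i))
              = Complex.abs A ^ i * Complex.abs B ^ (N - 1 - i) := by
                rw [map_mul, map_pow, map_pow]
            _ ≤ m ^ i * m ^ (N - 1 - i) :=
                mul_le_mul (pow_le_pow_left₀ (Complex.abs.nonneg _) hAm i)
                  (pow_le_pow_left₀ (Complex.abs.nonneg _) hBm _)
                  (by positivity) (by positivity)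
            _ = m ^ (N - 1) := by rw [← pow_add, this]
      _ = N * m ^ (N - 1) := by rw [Finset.sum_const, Finset.card_range, nsmul_eq_mul]
  have hmpow : m ^ (N - 1) ≤ Real.exp (|a| * R + C * R ^ 2) := by
    have h1 : m ^ (N - 1) ≤ m ^ N := pow_le_pow_right₀ hm1 (Nat.sub_le N 1)
    refine h1.trans ?_
    rw [hm, ← Real.exp_nat_mul]
    apply Real.exp_le_exp.mpr
    have e1 : (N : ℝ) * (|a| * (R / N) + C * (R / N) ^ 2) = |a| * R + C * R ^ 2 / N := by
      field_simp
    rw [e1]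
    have hN1' : (1:ℝ) ≤ N := by exact_mod_cast hN1
    have : C * R ^ 2 / N ≤ C * R ^ 2 := by
      rw [div_le_iff₀ hNpos]
      nlinarith [mul_nonneg hC0.le (sq_nonneg R)]
    linarith
  calc Complex.abs (A ^ N - Complex.exp (Complex.I * a * z))
      = Complex.abs ((∑ i ∈ Finset.range N, A ^ i * B ^ (N - 1 - i)) * (A - B)) := by
        rw [hgeom, hBpow]
    _ = Complex.abs (∑ i ∈ Finset.range N, A ^ i * B ^ (N - 1 - i)) * Complex.abs (A - B) :=
        map_mul _ _ _
    _ ≤ (N * Real.exp (|a| * R + C * R ^ 2)) * (C * (R / N) ^ 2) := by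
        apply mul_le_mul (hsum.trans ?_) hAB (Complex.abs.nonneg _) (by positivity)
        exact mul_le_mul_of_nonneg_left hmpow (Nat.cast_nonneg N)
    _ = Real.exp (|a| * R + C * R ^ 2) * C * R ^ 2 / N := by
        field_simp


lemma Gs_tlu (a : ℝ) :
    TendstoLocallyUniformlyOn (Gs a) (fun z => Complex.exp (Complex.I * a * z))
      Filter.atTop Set.univ := by
  rw [tendstoLocallyUniformlyOn_iff_forall_isCompact isOpen_univ]
  intro K _ hK
  obtain ⟨r, hr⟩ := hK.isBounded.subset_closedBall 0
  set R : ℝ := max r 0 with hR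
  have hR0 : 0 ≤ R := le_max_right r 0
  have hKR : K ⊆ Metric.closedBall 0 R :=
    hr.trans (Metric.closedBall_subset_closedBall (le_max_left r 0))
  obtain ⟨D, hD⟩ := main_est a R hR0
  rw [Metric.tendstoUniformlyOn_iff]
  intro ε hε
  have h1 : Filter.Tendsto (fun N : ℕ => D / N) Filter.atTop (nhds 0) :=
    tendsto_const_div_atTop_nhds_zero_nat D
  filter_upwards [Filter.eventually_ge_atTop 1,
    Filter.eventually_ge_atTop ⌈(1 + |a|) * R⌉₊,
    h1.eventually (gt_mem_nhds hε)] with N hN1 hN2 hN3 z hzK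
  have hz : Complex.abs z ≤ R := by
    simpa [Complex.dist_eq] using hKR hzK
  have hNR : (1 + |a|) * R ≤ N := Nat.ceil_le.mp hN2
  have hNne : N ≠ 0 := Nat.one_le_iff_ne_zero.mp hN1
  rw [Complex.dist_eq]
  have := hD N hN1 hNR z hz
  rw [Gs_eq_pow a hNne]
  calc Complex.abs (Complex.exp (Complex.I * a * z) -
        ((1 - (a : ℂ)) / 2 * Complex.exp (-(Complex.I * z / N)) +
          (1 + (a : ℂ)) / 2 * Complex.exp (Complex.I * z / N)) ^ N)
      = Complex.abs (((1 - (a : ℂ)) / 2 * Complex.exp (-(Complex.I * z / N)) +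
          (1 + (a : ℂ)) / 2 * Complex.exp (Complex.I * z / N)) ^ N -
          Complex.exp (Complex.I * a * z)) := by rw [← Complex.abs.map_neg]; ring_nf
    _ ≤ D / N := this
    _ < ε := hN3

lemma iter_tlu (a : ℝ) (k : ℕ) :
    TendstoLocallyUniformlyOn (fun N => iteratedDeriv k (Gs a N))
      (iteratedDeriv k (fun z => Complex.exp (Complex.I * a * z)))
      Filter.atTop Set.univ := by
  induction k with
  | zero => simpa [iteratedDeriv_zero] using Gs_tlu a
  | succ n ih =>
      have h := ih.deriv
        (Filter.Eventually.of_forall fun N =>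
          (entire_iteratedDeriv (Gs_diff a N) n).differentiableOn)
        isOpen_univ
      simpa [iteratedDeriv_succ, Function.comp_def] using h

lemma transfer {f : ℂ → ℂ} (hf : Differentiable ℂ f) (k : ℕ) :
    iteratedDeriv k (fun y : ℝ => f ↑y) = fun x : ℝ => iteratedDeriv k f ↑x := by
  induction k with
  | zero => simp [iteratedDeriv_zero]
  | succ n ih =>
      rw [iteratedDeriv_succ, iteratedDeriv_succ, ih]
      funext x
      exact (((entire_iteratedDeriv hf n) ↑x).hasDerivAt.comp_ofReal).deriv

end FNproof

theorem FN_derivatives_tendsto_uniformly (a lam : ℝ) (k : ℕ)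
    (K : Set ℝ) (hK : IsCompact K) :
    TendstoUniformlyOn
      (fun (N : ℕ) (x : ℝ) =>
        iteratedDeriv k (fun y : ℝ =>
          ∑ j ∈ Finset.range (N + 1),
            (N.choose j : ℂ) * ((1 + (a : ℂ)) / 2) ^ (N - j) *
              ((1 - (a : ℂ)) / 2) ^ j *
              Complex.exp (Complex.I * (1 - 2 * (j : ℂ) / N) * y)) x)
      (fun x : ℝ => (Complex.I * a) ^ k * Complex.exp (Complex.I * a * x))
      Filter.atTop K := by
  classical
  have hKc : IsCompact (Complex.ofReal '' K) := hK.image Complex.continuous_ofReal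
  have h0 := (FNproof.iter_tlu a k).mono (Set.subset_univ (Complex.ofReal '' K))
  have h1 := (tendstoLocallyUniformlyOn_iff_tendstoUniformlyOn_of_compact hKc).mp h0
  have h2 := h1.comp Complex.ofReal
  have h3 := h2.mono (Set.subset_preimage_image Complex.ofReal K)
  have h4 : TendstoUniformlyOn
      (fun (N : ℕ) (x : ℝ) => iteratedDeriv k (fun y : ℝ => FNproof.Gs a N ↑y) x)
      ((iteratedDeriv k fun z => Complex.exp (Complex.I * a * z)) ∘ Complex.ofReal)
      Filter.atTop K := by
    apply h3.congr
    apply Filter.Eventually.of_forall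
    intro N x _
    simp only [Function.comp_apply]
    rw [FNproof.transfer (FNproof.Gs_diff a N) k]
  have h5 := h4.congr_right (g := fun x : ℝ =>
      (Complex.I * a) ^ k * Complex.exp (Complex.I * a * x)) ?_
  · exact h5
  · intro x _
    simp only [Function.comp_apply]
    rw [show (fun z : ℂ => Complex.exp (Complex.I * a * z)) =
        (fun z : ℂ => Complex.exp ((Complex.I * a) * z)) from rfl,
      iteratedDeriv_cexp_const_mul]
end
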